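/- arXiv:2107.01120 — 5 statements merged into one kernel-verified Lean document; each statement's English description precedes it below -/
import Mathlib

section
/- For real numbers D ≥ N ≥ 1, σ < 1, τ > 0 and s > 0, define ψ(σ,τ;ξ) := (ξ^σ − τ^σ)/σ if σ ≠ 0 and := log(ξ/τ) if σ = 0, and A(z) := −(z−τ)²/(4D) + (1 − σN/D)·log z + (s/D)·ψ(σ,τ;z) for z > 0. Then A is strictly concave on (0,∞), there exists a unique z > 0 with A′(z) = 0, this point ζ is the unique maximizer of A on (0,∞), and it satisfies ζ > τ and ζ² = τζ + 2s·ζ^σ + 2D·(1 − σN/D). -/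
noncomputable section

/-- The function ψ(σ,τ;ξ) of the generalized gamma process. -/
def psiR (σ τ ξ : ℝ) : ℝ := if σ = 0 then Real.log (ξ / τ) else (ξ ^ σ - τ ^ σ) / σ

/-- The saddle-point function A(z). -/
def Afun (D N σ τ s : ℝ) : ℝ → ℝ := fun z =>
  -(z - τ) ^ 2 / (4 * D) + (1 - σ * N / D) * Real.log z + (s / D) * psiR σ τ z

lemma psiR_hasDerivAt (σ : ℝ) {τ z : ℝ} (hτ : 0 < τ) (hz : 0 < z) :
    HasDerivAt (psiR σ τ) (z ^ (σ - 1)) z := by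
  by_cases h : σ = 0
  · subst h
    have h1 : HasDerivAt (fun ξ : ℝ => Real.log (ξ / τ)) ((1/τ) / (z/τ)) z :=
      ((hasDerivAt_id z).div_const τ).log (by positivity)
    have h2 : (1/τ) / (z/τ) = z ^ ((0:ℝ) - 1) := by
      rw [zero_sub, Real.rpow_neg_one]
      field_simp
    rw [h2] at h1
    convert h1 using 1
    funext ξ; simp [psiR]
  · have h1 : HasDerivAt (fun ξ : ℝ => (ξ ^ σ - τ ^ σ) / σ) ((σ * z ^ (σ - 1)) / σ) z :=
      ((Real.hasDerivAt_rpow_const (Or.inl hz.ne')).sub_const _).div_const σ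
    rw [mul_comm, mul_div_assoc, div_self h, mul_one] at h1
    convert h1 using 1
    funext ξ; simp [psiR, h]

lemma Afun_hasDerivAt (D N σ τ s : ℝ) (hD : 0 < D) {z : ℝ} (hτ : 0 < τ) (hz : 0 < z) :
    HasDerivAt (Afun D N σ τ s)
      (-(z - τ) / (2 * D) + (1 - σ * N / D) / z + (s / D) * z ^ (σ - 1)) z := by
  have h1 : HasDerivAt (fun z : ℝ => -(z - τ) ^ 2 / (4 * D))
      (-((2:ℕ) * (z - τ) ^ 1 * 1) / (4 * D)) z :=
    (((hasDerivAt_id z).sub_const τ).pow 2).neg.div_const (4 * D)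
  have h2 : HasDerivAt (fun z : ℝ => (1 - σ * N / D) * Real.log z)
      ((1 - σ * N / D) * z⁻¹) z := (Real.hasDerivAt_log hz.ne').const_mul _
  have h3 : HasDerivAt (fun z : ℝ => (s / D) * psiR σ τ z)
      ((s / D) * z ^ (σ - 1)) z := (psiR_hasDerivAt σ hτ hz).const_mul _
  have := (h1.add h2).add h3
  refine this.congr_deriv ?_
  have : -((2:ℕ) * (z - τ) ^ 1 * 1) / (4 * D) = -(z - τ) / (2 * D) := by
    push_cast; field_simp; ring
  rw [this, div_eq_mul_inv (1 - σ * N / D)]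

/-- A is strictly concave on (0,∞), has a unique positive critical point ζ,
which is the unique maximizer on (0,∞); moreover ζ > τ and
ζ² = τζ + 2sζ^σ + 2D(1 − σN/D). -/
theorem saddle_point_existence_uniqueness
    (D N σ τ s : ℝ) (hN : 1 ≤ N) (hND : N ≤ D) (hσ : σ < 1) (hτ : 0 < τ) (hs : 0 < s) :
    StrictConcaveOn ℝ (Set.Ioi (0 : ℝ)) (Afun D N σ τ s) ∧
    ∃ ζ : ℝ, 0 < ζ ∧ deriv (Afun D N σ τ s) ζ = 0 ∧
      (∀ z : ℝ, 0 < z → deriv (Afun D N σ τ s) z = 0 → z = ζ) ∧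
      (∀ z : ℝ, 0 < z → z ≠ ζ → Afun D N σ τ s z < Afun D N σ τ s ζ) ∧
      τ < ζ ∧
      ζ ^ 2 = τ * ζ + 2 * s * ζ ^ σ + 2 * D * (1 - σ * N / D) := by
  have hD : (0:ℝ) < D := lt_of_lt_of_le (lt_of_lt_of_le one_pos hN) hND
  have hσN : σ * N < D := by nlinarith
  have hc : 0 < 1 - σ * N / D := by rw [sub_pos, div_lt_one hD]; exact hσN
  set c := 1 - σ * N / D with hc_def
  set g : ℝ → ℝ := fun z => -(z - τ) / (2 * D) + c / z + (s / D) * z ^ (σ - 1) with hg_def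
  have hder : ∀ z : ℝ, 0 < z → HasDerivAt (Afun D N σ τ s) (g z) z :=
    fun z hz => Afun_hasDerivAt D N σ τ s hD hτ hz
  have hderiv : ∀ z : ℝ, 0 < z → deriv (Afun D N σ τ s) z = g z :=
    fun z hz => (hder z hz).deriv
  have hganti : StrictAntiOn g (Set.Ioi 0) := by
    intro x hx y hy hxy
    simp only [Set.mem_Ioi] at hx hy
    have t1 : -(y - τ) / (2 * D) < -(x - τ) / (2 * D) := by
      apply div_lt_div_of_pos_right (by linarith) (by linarith)
    have t2 : c / y < c / x := div_lt_div_of_pos_left hc hx hxy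
    have t3 : (s / D) * y ^ (σ - 1) ≤ (s / D) * x ^ (σ - 1) := by
      have h1 := Real.rpow_lt_rpow_of_neg hx hxy (by linarith : σ - 1 < 0)
      have h2 : 0 < s / D := by positivity
      nlinarith
    simp only [hg_def]
    linarith
  have hAcont : ContinuousOn (Afun D N σ τ s) (Set.Ioi 0) :=
    fun z hz => ((hder z hz).continuousAt).continuousWithinAt
  have hconc : StrictConcaveOn ℝ (Set.Ioi (0 : ℝ)) (Afun D N σ τ s) := by
    apply StrictAntiOn.strictConcaveOn_of_deriv (convex_Ioi 0) hAcont
    rw [interior_Ioi]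
    intro x hx y hy hxy
    rw [hderiv x hx, hderiv y hy]
    exact hganti hx hy hxy
  -- continuity of g
  have hgcont : ∀ z : ℝ, 0 < z → ContinuousAt g z := by
    intro z hz
    have h1 : ContinuousAt (fun z : ℝ => z ^ (σ - 1)) z :=
      Real.continuousAt_rpow_const z _ (Or.inl hz.ne')
    exact (((continuousAt_id.sub continuousAt_const).neg.div_const _).add
      (continuousAt_const.div continuousAt_id hz.ne')).add (h1.const_mul _)
  -- endpoints
  have hgτ : 0 < g τ := by
    have h1 : (0:ℝ) < τ ^ (σ - 1) := Real.rpow_pos_of_pos hτ _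
    have : g τ = c / τ + (s / D) * τ ^ (σ - 1) := by simp [hg_def]
    rw [this]
    positivity
  set b : ℝ := τ + 2 * D * c + 2 * s + 1 with hb_def
  have hb1 : (1:ℝ) ≤ b := by nlinarith
  have hτb : τ ≤ b := by nlinarith
  have hb0 : (0:ℝ) < b := by linarith
  have hgb : g b < 0 := by
    have h1 : b ^ (σ - 1) ≤ 1 :=
      Real.rpow_le_one_of_one_le_of_nonpos hb1 (by linarith)
    have h2 : c / b ≤ c := div_le_self hc.le hb1
    have h3 : (s / D) * b ^ (σ - 1) ≤ s / D := by
      have : 0 < s / D := by positivity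
      nlinarith
    have h4 : -(b - τ) / (2 * D) = -c - s / D - 1 / (2 * D) := by
      rw [hb_def]; field_simp; ring
    have h5 : (0:ℝ) < 1 / (2 * D) := by positivity
    simp only [hg_def]
    rw [h4]
    linarith
  -- IVT
  obtain ⟨ζ, hζmem, hgζ⟩ : ∃ ζ ∈ Set.Icc τ b, g ζ = 0 := by
    have hcont : ContinuousOn g (Set.Icc τ b) := fun z hz =>
      (hgcont z (lt_of_lt_of_le hτ hz.1)).continuousWithinAt
    have := intermediate_value_Icc' hτb hcont
    have h0 : (0:ℝ) ∈ Set.Icc (g b) (g τ) := ⟨hgb.le, hgτ.le⟩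
    obtain ⟨ζ, hζ, hgζ⟩ := this h0
    exact ⟨ζ, hζ, hgζ⟩
  have hζpos : 0 < ζ := lt_of_lt_of_le hτ hζmem.1
  have hζIoi : ζ ∈ Set.Ioi (0:ℝ) := hζpos
  refine ⟨hconc, ζ, hζpos, by rw [hderiv ζ hζpos]; exact hgζ, ?_, ?_, ?_, ?_⟩
  · -- uniqueness of critical point
    intro z hz hdz
    rw [hderiv z hz] at hdz
    exact hganti.injOn hz hζIoi (by rw [hdz, hgζ])
  · -- maximizer
    intro z hz hne
    rcases lt_or_gt_of_ne hne with hlt | hgt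
    · have hmono : StrictMonoOn (Afun D N σ τ s) (Set.Icc z ζ) := by
        apply strictMonoOn_of_deriv_pos (convex_Icc z ζ)
        · exact hAcont.mono (fun x hx => lt_of_lt_of_le hz hx.1)
        · intro x hx
          rw [interior_Icc] at hx
          have hx0 : 0 < x := lt_trans hz hx.1
          rw [hderiv x hx0, ← hgζ]
          exact hganti hx0 hζIoi hx.2
      exact hmono (Set.left_mem_Icc.2 hlt.le) (Set.right_mem_Icc.2 hlt.le) hlt
    · have hanti : StrictAntiOn (Afun D N σ τ s) (Set.Icc ζ z) := by
        apply strictAntiOn_of_deriv_neg (convex_Icc ζ z)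
        · exact hAcont.mono (fun x hx => lt_of_lt_of_le hζpos hx.1)
        · intro x hx
          rw [interior_Icc] at hx
          have hx0 : 0 < x := lt_trans hζpos hx.1
          rw [hderiv x hx0, ← hgζ]
          exact hganti hζIoi hx0 hx.1
      exact hanti (Set.left_mem_Icc.2 hgt.le) (Set.right_mem_Icc.2 hgt.le) hgt
  · -- τ < ζ
    rcases lt_or_ge τ ζ with h | h
    · exact h
    · exfalso
      rcases eq_or_lt_of_le h with h' | h'
      · rw [← h', hgζ] at hgτ; exact lt_irrefl 0 hgτ
      · have := hganti hζIoi (Set.mem_Ioi.2 hτ) h'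
        rw [hgζ] at this; linarith
  · -- equation
    have heq : -(ζ - τ) / (2 * D) + c / ζ + (s / D) * ζ ^ (σ - 1) = 0 := hgζ
    rw [Real.rpow_sub_one hζpos.ne'] at heq
    field_simp at heq
    have hD2 : (D * ζ) * D ≠ 0 := by positivity
    have : (ζ ^ 2 - (τ * ζ + 2 * s * ζ ^ σ + 2 * D * c)) * (D * ζ) = 0 := by
      linear_combination -(D * ζ) * heq
    have h6 := mul_eq_zero.mp this
    rcases h6 with h6 | h6
    · linarith [sub_eq_zero.mp h6]
    · exfalso; exact (by positivity : (0:ℝ) < D * ζ).ne' h6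
end
end

section
/- Let D ≥ N ≥ 1 be reals, σ < 1, τ > 0, s > 0. Extend A to the cut complex plane by A(z) := −(z−τ)²/(4D) + (1 − σN/D)·Log z + (s/D)·ψ(σ,τ;z) for z ∈ ℂ∖(−∞,0], where Log is the principal logarithm, z^σ := exp(σ·Log z), and ψ(σ,τ;z) := (z^σ − τ^σ)/σ if σ ≠ 0 and := Log(z/τ) if σ = 0. Let ζ > 0 be the unique positive solution of ∂_z A(z) = 0. Then for every real z: Re(A(ζ − i·z)) − A(ζ) ≥ z²/(4D). -/
noncomputable section

/-- The function ψ(σ,τ;z) extended to the cut complex plane, with principal powers. -/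
def psiC (σ τ : ℝ) (z : ℂ) : ℂ :=
  if σ = 0 then Complex.log (z / (τ : ℂ)) else (z ^ (σ : ℂ) - (τ : ℂ) ^ (σ : ℂ)) / (σ : ℂ)

/-- The saddle-point function A(z) extended to the cut complex plane. -/
def AfunC (D N σ τ s : ℝ) (z : ℂ) : ℂ :=
  -(z - (τ : ℂ)) ^ 2 / (4 * (D : ℂ)) + ((1 - σ * N / D : ℝ) : ℂ) * Complex.log z +
    ((s / D : ℝ) : ℂ) * psiC σ τ z

/-- Weighted-power inequality for cosine: `cos θ ^ σ ≤ cos (σθ)` for `σ ∈ [0,1]`,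
`θ ∈ [-π/2, π/2]`. -/
lemma cos_rpow_le_cos_mul {θ σp : ℝ} (hθ : θ ∈ Set.Icc (-(Real.pi/2)) (Real.pi/2))
    (h0 : 0 ≤ σp) (h1 : σp ≤ 1) (hc : 0 ≤ Real.cos θ) :
    Real.cos θ ^ σp ≤ Real.cos (σp * θ) := by
  have hgm : Real.cos θ ^ σp * (1:ℝ) ^ (1 - σp) ≤ σp * Real.cos θ + (1 - σp) * 1 :=
    Real.geom_mean_le_arith_mean2_weighted h0 (by linarith) hc zero_le_one (by ring)
  have h0mem : (0:ℝ) ∈ Set.Icc (-(Real.pi/2)) (Real.pi/2) := by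
    constructor <;> [linarith [Real.pi_pos]; linarith [Real.pi_pos]]
  have hcc := (strictConcaveOn_cos_Icc.concaveOn).2 hθ h0mem h0 (by linarith : (0:ℝ) ≤ 1 - σp)
    (by ring)
  simp only [smul_eq_mul, mul_zero, add_zero, Real.cos_zero, mul_one] at hcc
  calc Real.cos θ ^ σp = Real.cos θ ^ σp * (1:ℝ) ^ (1 - σp) := by
        rw [Real.one_rpow, mul_one]
    _ ≤ σp * Real.cos θ + (1 - σp) * 1 := hgm
    _ ≤ Real.cos (σp * θ) := by rw [mul_one]; exact hcc

lemma re_cpow_eq {w : ℂ} (hw : w ≠ 0) (σp : ℝ) :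
    (w ^ (σp : ℂ)).re = ‖w‖ ^ σp * Real.cos (σp * Complex.arg w) := by
  rw [Complex.cpow_def_of_ne_zero hw, Complex.exp_re]
  have h1 : (Complex.log w * (σp:ℂ)).re = Real.log ‖w‖ * σp := by
    simp [Complex.mul_re, Complex.log_re]
  have h2 : (Complex.log w * (σp:ℂ)).im = Complex.arg w * σp := by
    simp [Complex.mul_im, Complex.log_im]
  rw [h1, h2, Real.rpow_def_of_pos (norm_pos_iff.mpr hw), mul_comm σp]

/-- along the vertical contour through the saddle point ζ,
Re(A(ζ − i z)) − A(ζ) ≥ z²/(4D) for all real z. -/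
theorem re_along_contour_ge
    (D N σ τ s : ℝ) (hN : 1 ≤ N) (hND : N ≤ D) (hσ : σ < 1) (hτ : 0 < τ) (hs : 0 < s)
    (ζ : ℝ) (hζpos : 0 < ζ) (hζ : deriv (Afun D N σ τ s) ζ = 0)
    (huniq : ∀ z : ℝ, 0 < z → deriv (Afun D N σ τ s) z = 0 → z = ζ) :
    ∀ z : ℝ, z ^ 2 / (4 * D) ≤
      (AfunC D N σ τ s ((ζ : ℂ) - Complex.I * (z : ℂ))).re - Afun D N σ τ s ζ := by
  intro z
  have hD : (0:ℝ) < D := by linarith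
  set c : ℝ := 1 - σ * N / D with hcdef
  have hc0 : 0 ≤ c := by
    have hσN : σ * N ≤ D := by nlinarith
    have : σ * N / D ≤ 1 := (div_le_one hD).2 hσN
    rw [hcdef]; linarith
  set w : ℂ := (ζ : ℂ) - Complex.I * (z : ℂ) with hwdef
  have hwre : w.re = ζ := by simp [hwdef]
  have hwim : w.im = -z := by simp [hwdef]
  have hw0 : w ≠ 0 := by
    intro h; rw [h] at hwre; simp at hwre; linarith
  set r : ℝ := ‖w‖ with hrdef
  have hrpos : 0 < r := norm_pos_iff.mpr hw0
  have hζr : ζ ≤ r := by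
    calc ζ = |w.re| := by rw [hwre, abs_of_pos hζpos]
    _ ≤ r := Complex.abs_re_le_norm w
  set θ : ℝ := Complex.arg w with hθdef
  have hcosθ : Real.cos θ = ζ / r := by rw [hθdef, Complex.cos_arg hw0, hwre]
  have hcospos : 0 < Real.cos θ := by rw [hcosθ]; positivity
  have hζeq : ζ = r * Real.cos θ := by rw [hcosθ]; field_simp
  have hθmem : θ ∈ Set.Icc (-(Real.pi/2)) (Real.pi/2) := by
    have h := Complex.abs_arg_lt_pi_div_two_iff.2 (Or.inl (by rw [hwre]; exact hζpos))
    have h2 := abs_lt.1 h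
    exact ⟨by linarith [h2.1], le_of_lt h2.2⟩
  have hlog : Real.log ζ ≤ Real.log r := Real.log_le_log hζpos hζr
  -- the ψ comparison
  have hpsi : psiR σ τ ζ ≤ (psiC σ τ w).re := by
    by_cases h0 : σ = 0
    · subst h0
      simp only [psiR, psiC, if_true, Complex.log_re]
      have habs : ‖w / (τ:ℂ)‖ = r / τ := by
        rw [norm_div, Complex.norm_real, Real.norm_eq_abs, abs_of_pos hτ]
      rw [habs]
      exact Real.log_le_log (by positivity) (by gcongr)
    · simp only [psiR, psiC, if_neg h0]
      have hτσ : ((τ:ℂ)) ^ ((σ:ℂ)) = (((τ ^ σ : ℝ)) : ℂ) := (Complex.ofReal_cpow hτ.le σ).symm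
      rw [hτσ, Complex.div_ofReal_re, Complex.sub_re, Complex.ofReal_re]
      have hwσ : (w ^ (σ:ℂ)).re = r ^ σ * Real.cos (σ * θ) := re_cpow_eq hw0 σ
      have hζσ : ζ ^ σ = r ^ σ * Real.cos θ ^ σ := by
        rw [hζeq, Real.mul_rpow hrpos.le hcospos.le]
      rcases lt_or_gt_of_ne h0 with hneg | hpos
      · -- σ < 0 : Re(w^σ) ≤ ζ^σ, division flips
        have hkey : (w ^ (σ:ℂ)).re ≤ ζ ^ σ := by
          rw [hwσ, hζσ]
          have h1 : Real.cos (σ * θ) ≤ 1 := Real.cos_le_one _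
          have h2 : (1:ℝ) ≤ Real.cos θ ^ σ :=
            Real.one_le_rpow_of_pos_of_le_one_of_nonpos hcospos (Real.cos_le_one θ) hneg.le
          have := Real.rpow_nonneg hrpos.le σ
          nlinarith
        have hσinv : (σ:ℝ)⁻¹ ≤ 0 := inv_nonpos.2 hneg.le
        rw [div_eq_mul_inv, div_eq_mul_inv]
        have := mul_le_mul_of_nonpos_right (sub_le_sub_right hkey (τ ^ σ)) hσinv
        linarith
      · -- 0 < σ < 1 : ζ^σ ≤ Re(w^σ)
        have hkey : ζ ^ σ ≤ (w ^ (σ:ℂ)).re := by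
          rw [hwσ, hζσ]
          have := cos_rpow_le_cos_mul hθmem hpos.le hσ.le hcospos.le
          have hrσ : (0:ℝ) ≤ r ^ σ := Real.rpow_nonneg hrpos.le σ
          nlinarith
        rw [div_eq_mul_inv, div_eq_mul_inv]
        exact mul_le_mul_of_nonneg_right (by linarith) (inv_nonneg.2 hpos.le)
  -- real part of AfunC at w
  have hre : (AfunC D N σ τ s w).re =
      (z ^ 2 - (ζ - τ) ^ 2) / (4 * D) + c * Real.log r + (s / D) * (psiC σ τ w).re := by
    have hT1 : (-(w - (τ:ℂ)) ^ 2 / (4 * (D:ℂ))).re = (z ^ 2 - (ζ - τ) ^ 2) / (4 * D) := by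
      have h4D : (4 * (D:ℂ)) = ((4 * D : ℝ) : ℂ) := by push_cast; ring
      rw [h4D, Complex.div_ofReal_re]
      have hnum : (-(w - (τ:ℂ)) ^ 2).re = z ^ 2 - (ζ - τ) ^ 2 := by
        simp [pow_two, Complex.mul_re, Complex.sub_re, Complex.sub_im, hwre, hwim]
        try ring
      rw [hnum]
    have hT2 : (((1 - σ * N / D : ℝ) : ℂ) * Complex.log w).re = c * Real.log r := by
      rw [Complex.re_ofReal_mul, Complex.log_re]
    have hT3 : (((s / D : ℝ) : ℂ) * psiC σ τ w).re = (s / D) * (psiC σ τ w).re :=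
      Complex.re_ofReal_mul _ _
    simp only [AfunC, Complex.add_re, hT1, hT2, hT3]
  -- assemble
  have hAζ : Afun D N σ τ s ζ =
      -(ζ - τ) ^ 2 / (4 * D) + c * Real.log ζ + (s / D) * psiR σ τ ζ := rfl
  have h1 : c * Real.log ζ ≤ c * Real.log r := mul_le_mul_of_nonneg_left hlog hc0
  have hsD : (0:ℝ) ≤ s / D := by positivity
  have h2 : (s / D) * psiR σ τ ζ ≤ (s / D) * (psiC σ τ w).re :=
    mul_le_mul_of_nonneg_left hpsi hsD
  have hsplit : (z ^ 2 - (ζ - τ) ^ 2) / (4 * D) = z ^ 2 / (4 * D) - (ζ - τ) ^ 2 / (4 * D) := by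
    ring
  have hneg : -(ζ - τ) ^ 2 / (4 * D) = -((ζ - τ) ^ 2 / (4 * D)) := by ring
  rw [hre, hAζ, hsplit, hneg]
  clear_value c w r θ
  linarith
end
end

section
/- For every α ∈ (0,1) and α₀ ∈ (0,1): ∫₀^∞ ∫₀¹ [ (1 − e^{−u·y})/u − (e^{−u·y} − e^{−y})/(1−u) ] · (1−u)^{−α} · y^{−1−α₀} du dy = (Γ(1−α₀)/α₀) · ( 1/α + (1 − α₀/α) · Γ(1−α)·Γ(α₀)/Γ(1+α₀−α) ). -/
open MeasureTheory Set Real Filter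

lemma one_sub_exp_le (x : ℝ) : 1 - Real.exp (-x) ≤ x := by
  nlinarith [Real.add_one_le_exp (-x)]

lemma one_sub_exp_nonneg {x : ℝ} (hx : 0 ≤ x) : 0 ≤ 1 - Real.exp (-x) := by
  simp only [sub_nonneg]
  exact Real.exp_le_one_iff.mpr (by linarith)

lemma phi_int {s : ℝ} (hs : 0 < s) (hs1 : s < 1) {c : ℝ} (hc : 0 < c) :
    IntegrableOn (fun y => (1 - Real.exp (-(c*y))) * y ^ (-1-s)) (Ioi (0:ℝ)) := by
  have hmeas : ∀ t : Set ℝ, t ⊆ Ioi 0 → MeasurableSet t →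
      AEStronglyMeasurable (fun y => (1 - Real.exp (-(c*y))) * y ^ (-1-s))
        (volume.restrict t) := by
    intro t ht hmt
    apply ContinuousOn.aestronglyMeasurable _ hmt
    apply ContinuousOn.mul (by fun_prop)
    intro y hy
    exact (Real.continuousAt_rpow_const y _ (Or.inl (ne_of_gt (ht hy)))).continuousWithinAt
  rw [← Ioc_union_Ioi_eq_Ioi (le_of_lt one_pos)]
  apply IntegrableOn.union
  · -- on (0,1]: dominated by c * y^(-s)
    have hint : IntegrableOn (fun y : ℝ => c * y ^ (-s)) (Ioc (0:ℝ) 1) :=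
      ((intervalIntegral.intervalIntegrable_rpow' (a := 0) (b := 1) (r := -s)
        (by linarith)).1).const_mul c
    apply Integrable.mono' hint (hmeas _ Ioc_subset_Ioi_self measurableSet_Ioc)
    filter_upwards [ae_restrict_mem measurableSet_Ioc] with y hy
    have hy0 : 0 < y := hy.1
    have h1 : 0 ≤ 1 - Real.exp (-(c*y)) := one_sub_exp_nonneg (by positivity)
    rw [Real.norm_eq_abs, abs_of_nonneg (by positivity)]
    calc (1 - Real.exp (-(c*y))) * y ^ (-1-s) ≤ (c*y) * y ^ (-1-s) := by
          apply mul_le_mul_of_nonneg_right (one_sub_exp_le _) (Real.rpow_nonneg hy0.le _)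
      _ = c * y ^ (-s) := by
          rw [mul_assoc]
          congr 1
          rw [show (-s:ℝ) = 1 + (-1-s) by ring, Real.rpow_add hy0, Real.rpow_one]
  · -- on (1,∞): dominated by y^(-1-s)
    have hint : IntegrableOn (fun y : ℝ => y ^ (-1-s)) (Ioi (1:ℝ)) :=
      integrableOn_Ioi_rpow_of_lt (by linarith) one_pos
    apply Integrable.mono' hint (hmeas _ (Ioi_subset_Ioi one_pos.le) measurableSet_Ioi)
    filter_upwards [ae_restrict_mem measurableSet_Ioi] with y hy
    have hy0 : (0:ℝ) < y := lt_trans one_pos hy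
    have h1 : 0 ≤ 1 - Real.exp (-(c*y)) := one_sub_exp_nonneg (by positivity)
    have h2 : 1 - Real.exp (-(c*y)) ≤ 1 := by
      have := Real.exp_pos (-(c*y)); linarith
    rw [Real.norm_eq_abs, abs_of_nonneg (by positivity)]
    nlinarith [Real.rpow_nonneg hy0.le (-1-s)]

lemma gamma_int {s : ℝ} (hs : 0 < s) (hs1 : s < 1) :
    IntegrableOn (fun y : ℝ => Real.exp (-y) * y ^ (-s)) (Ioi (0:ℝ)) := by
  have := Real.GammaIntegral_convergent (s := 1 - s) (by linarith)
  apply this.congr_fun _ measurableSet_Ioi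
  intro y _
  norm_num

lemma gamma_val {s : ℝ} (hs : 0 < s) (hs1 : s < 1) :
    ∫ y in Ioi (0:ℝ), Real.exp (-y) * y ^ (-s) = Real.Gamma (1 - s) := by
  rw [Real.Gamma_eq_integral (by linarith : (0:ℝ) < 1 - s)]
  apply setIntegral_congr_fun measurableSet_Ioi
  intro y _
  norm_num

lemma phi_one {s : ℝ} (hs : 0 < s) (hs1 : s < 1) :
    ∫ y in Ioi (0:ℝ), (1 - Real.exp (-y)) * y ^ (-1-s) = Real.Gamma (1 - s) / s := by
  set F : ℝ → ℝ := fun y => -(1/s) * ((1 - Real.exp (-y)) * y ^ (-s)) with hF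
  set F' : ℝ → ℝ := fun y =>
    (1 - Real.exp (-y)) * y ^ (-1-s) - (1/s) * (Real.exp (-y) * y ^ (-s)) with hF'
  have hF0 : F 0 = 0 := by simp [hF, Real.zero_rpow (by linarith : (-s:ℝ) ≠ 0)]
  have hderiv : ∀ y ∈ Ioi (0:ℝ), HasDerivAt F (F' y) y := by
    intro y hy
    have hy0 : (0:ℝ) < y := hy
    have h1 : HasDerivAt (fun y : ℝ => 1 - Real.exp (-y)) (Real.exp (-y)) y := by
      have := ((Real.hasDerivAt_exp (-y)).comp y ((hasDerivAt_id y).neg))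
      simpa using (this.const_sub 1)
    have h2 : HasDerivAt (fun y : ℝ => y ^ (-s)) ((-s) * y ^ (-s-1)) y :=
      Real.hasDerivAt_rpow_const (Or.inl hy0.ne')
    have := (h1.mul h2).const_mul (-(1/s))
    refine HasDerivAt.congr_deriv this ?_
    symm
    have hrw : y ^ (-s-1) = y ^ (-1-s) := by rw [show (-s-1:ℝ) = -1-s by ring]
    rw [hF']
    field_simp [hF', hrw]
    ring
  have hcont : ContinuousWithinAt F (Ici 0) 0 := by
    rw [ContinuousWithinAt, hF0]
    apply squeeze_zero_norm' (a := fun y => (1/s) * y ^ (1-s))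
    · filter_upwards [self_mem_nhdsWithin] with y (hy : (0:ℝ) ≤ y)
      rcases eq_or_lt_of_le hy with h | h
      · simp [hF, ← h, Real.zero_rpow (by linarith : (-s:ℝ) ≠ 0),
          Real.zero_rpow (by linarith : (1-s:ℝ) ≠ 0)]
      · have h1 : 0 ≤ 1 - Real.exp (-y) := one_sub_exp_nonneg hy
        have h2 : (1 - Real.exp (-y)) * y ^ (-s) ≤ y * y ^ (-s) :=
          mul_le_mul_of_nonneg_right (one_sub_exp_le y) (Real.rpow_nonneg hy _)
        have h3 : y * y ^ (-s) = y ^ (1-s) := by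
          rw [show (1-s:ℝ) = 1 + (-s) by ring, Real.rpow_add h, Real.rpow_one]
        rw [hF, Real.norm_eq_abs, abs_mul, abs_of_nonneg (by positivity : (0:ℝ) ≤ (1 - Real.exp (-y)) * y ^ (-s))]
        rw [abs_neg, abs_of_nonneg (by positivity : (0:ℝ) ≤ 1/s)]
        rw [← h3]
        exact mul_le_mul_of_nonneg_left h2 (by positivity)
    · have : ContinuousAt (fun y : ℝ => (1/s) * y ^ (1-s)) 0 := by
        apply ContinuousAt.mul continuousAt_const
        exact Real.continuousAt_rpow_const 0 _ (Or.inr (by linarith))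
      have h0 : 1/s * (0:ℝ) ^ (1-s) = 0 := by
        simp [Real.zero_rpow (by linarith : (1-s:ℝ) ≠ 0)]
      have ht := this.tendsto
      rw [h0] at ht
      exact ht.mono_left nhdsWithin_le_nhds
  have htop : Tendsto F atTop (nhds 0) := by
    have h1 : Tendsto (fun y : ℝ => 1 - Real.exp (-y)) atTop (nhds 1) := by
      simpa using (tendsto_const_nhds (x := (1:ℝ)) (f := atTop)).sub
        Real.tendsto_exp_neg_atTop_nhds_zero
    have h2 : Tendsto (fun y : ℝ => y ^ (-s)) atTop (nhds 0) := tendsto_rpow_neg_atTop hs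
    have := ((h1.mul h2).const_mul (-(1/s)))
    simpa [hF, neg_mul, one_div] using this
  have hint : IntegrableOn F' (Ioi (0:ℝ)) :=
    (phi_int hs hs1 one_pos).congr_fun (fun y _ => by norm_num) measurableSet_Ioi
      |>.sub ((gamma_int hs hs1).const_mul (1/s))
  have key := integral_Ioi_of_hasDerivAt_of_tendsto
    (f := F) (f' := F') (a := 0) hcont hderiv hint htop
  rw [hF0, sub_zero] at key
  have hsplit : ∫ y in Ioi (0:ℝ), F' y =
      (∫ y in Ioi (0:ℝ), (1 - Real.exp (-y)) * y ^ (-1-s)) -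
      (1/s) * ∫ y in Ioi (0:ℝ), Real.exp (-y) * y ^ (-s) := by
    rw [hF', integral_sub, integral_const_mul]
    · exact (phi_int hs hs1 one_pos).congr_fun (fun y _ => by norm_num) measurableSet_Ioi
    · exact (gamma_int hs hs1).const_mul (1/s)
  rw [key, gamma_val hs hs1] at hsplit
  have : (∫ y in Ioi (0:ℝ), (1 - Real.exp (-y)) * y ^ (-1-s)) = (1/s) * Real.Gamma (1-s) := by
    linarith
  rw [this]; ring

lemma phi_val {s : ℝ} (hs : 0 < s) (hs1 : s < 1) {c : ℝ} (hc : 0 < c) :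
    ∫ y in Ioi (0:ℝ), (1 - Real.exp (-(c*y))) * y ^ (-1-s)
      = Real.Gamma (1 - s) / s * c ^ s := by
  have key := integral_comp_mul_left_Ioi
    (g := fun t : ℝ => (1 - Real.exp (-t)) * t ^ (-1-s)) (a := 0) (b := c) hc
  rw [mul_zero] at key
  have h1 : ∫ y in Ioi (0:ℝ), (1 - Real.exp (-(c*y))) * y ^ (-1-s)
      = c ^ (1+s) • ∫ y in Ioi (0:ℝ), (1 - Real.exp (-(c*y))) * (c*y) ^ (-1-s) := by
    rw [← integral_smul]
    apply setIntegral_congr_fun measurableSet_Ioi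
    intro y hy
    have hy0 : (0:ℝ) < y := hy
    simp only [smul_eq_mul]
    rw [Real.mul_rpow hc.le hy0.le]
    rw [show c ^ (1+s) * ((1 - Real.exp (-(c*y))) * (c ^ (-1-s) * y ^ (-1-s)))
        = (c ^ (1+s) * c ^ (-1-s)) * ((1 - Real.exp (-(c*y))) * y ^ (-1-s)) by ring,
      ← Real.rpow_add hc]
    norm_num
  rw [h1, key, phi_one hs hs1, smul_eq_mul, smul_eq_mul]
  rw [show c⁻¹ = c ^ (-1:ℝ) by rw [Real.rpow_neg_one], ← mul_assoc, ← Real.rpow_add hc]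
  ring_nf

lemma beta_coe (a b : ℝ) {x : ℝ} (hx : x ∈ Icc (0:ℝ) 1) :
    ((x ^ (a-1) * (1-x) ^ (b-1) : ℝ) : ℂ)
      = (x:ℂ) ^ ((a:ℂ)-1) * (1-(x:ℂ)) ^ ((b:ℂ)-1) := by
  push_cast
  rw [Complex.ofReal_cpow hx.1, Complex.ofReal_cpow (by linarith [hx.2] : (0:ℝ) ≤ 1 - x)]
  push_cast
  ring_nf

lemma beta_integrable {a b : ℝ} (ha : 0 < a) (hb : 0 < b) :
    IntegrableOn (fun u : ℝ => u ^ (a-1) * (1-u) ^ (b-1)) (Ioo (0:ℝ) 1) := by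
  have hC : IntervalIntegrable (fun x : ℝ =>
      (x : ℂ) ^ ((a:ℂ) - 1) * (1 - (x:ℂ)) ^ ((b:ℂ) - 1)) volume 0 1 :=
    Complex.betaIntegral_convergent (by simpa using ha) (by simpa using hb)
  have hC' : IntegrableOn (fun x : ℝ =>
      (x : ℂ) ^ ((a:ℂ) - 1) * (1 - (x:ℂ)) ^ ((b:ℂ) - 1)) (Ioc (0:ℝ) 1) := hC.1
  have hre : IntegrableOn (fun x : ℝ =>
      ((x : ℂ) ^ ((a:ℂ) - 1) * (1 - (x:ℂ)) ^ ((b:ℂ) - 1)).re) (Ioc (0:ℝ) 1) :=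
    Complex.reCLM.integrable_comp hC'
  have : IntegrableOn (fun u : ℝ => u ^ (a-1) * (1-u) ^ (b-1)) (Ioc (0:ℝ) 1) := by
    apply hre.congr_fun _ measurableSet_Ioc
    intro x hx
    simp only
    rw [← beta_coe a b ⟨hx.1.le, hx.2⟩, Complex.ofReal_re]
  exact this.mono_set Ioo_subset_Ioc_self

lemma beta_val {a b : ℝ} (ha : 0 < a) (hb : 0 < b) :
    ∫ u in Ioo (0:ℝ) 1, u ^ (a-1) * (1-u) ^ (b-1)
      = Real.Gamma a * Real.Gamma b / Real.Gamma (a+b) := by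
  have h1 : Complex.betaIntegral a b
      = ((∫ u in (0:ℝ)..1, u ^ (a-1) * (1-u) ^ (b-1) : ℝ) : ℂ) := by
    rw [Complex.betaIntegral, ← intervalIntegral.integral_ofReal]
    apply intervalIntegral.integral_congr
    intro x hx
    rw [uIcc_of_le (by norm_num : (0:ℝ) ≤ 1)] at hx
    exact (beta_coe a b hx).symm
  have h2 := Complex.Gamma_mul_Gamma_eq_betaIntegral
    (s := (a:ℂ)) (t := (b:ℂ)) (by simpa using ha) (by simpa using hb)
  rw [h1] at h2
  have h3 : ((a:ℂ) + b) = ((a+b : ℝ) : ℂ) := by push_cast; ring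
  rw [h3, Complex.Gamma_ofReal, Complex.Gamma_ofReal, Complex.Gamma_ofReal] at h2
  have h4 : Real.Gamma a * Real.Gamma b
      = Real.Gamma (a+b) * ∫ u in (0:ℝ)..1, u ^ (a-1) * (1-u) ^ (b-1) := by
    exact_mod_cast h2
  have h5 : (0:ℝ) < Real.Gamma (a+b) := Real.Gamma_pos_of_pos (by linarith)
  rw [intervalIntegral.integral_of_le (by norm_num : (0:ℝ) ≤ 1),
    integral_Ioc_eq_integral_Ioo] at h4
  rw [eq_div_iff h5.ne']
  linarith [h4]

section
variable {α α₀ : ℝ} (hα : 0 < α) (hα1 : α < 1) (h₀ : 0 < α₀) (h₀1 : α₀ < 1)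

include hα hα1 h₀ in
lemma int_beta1 : IntegrableOn (fun u : ℝ => u ^ (α₀-1) * (1-u) ^ (-α)) (Ioo (0:ℝ) 1) := by
  apply (beta_integrable h₀ (by linarith : (0:ℝ) < 1 - α)).congr_fun _ measurableSet_Ioo
  intro u _
  norm_num

include hα hα1 h₀ in
lemma val_beta1 : ∫ u in Ioo (0:ℝ) 1, u ^ (α₀-1) * (1-u) ^ (-α)
    = Real.Gamma α₀ * Real.Gamma (1-α) / Real.Gamma (1+α₀-α) := by
  have h := beta_val h₀ (by linarith : (0:ℝ) < 1 - α)
  rw [show α₀ + (1-α) = 1+α₀-α by ring] at h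
  rw [← h]
  apply setIntegral_congr_fun measurableSet_Ioo
  intro u _
  norm_num

include hα hα1 in
lemma int_W : IntegrableOn (fun u : ℝ => (1-u) ^ (-α)) (Ioo (0:ℝ) 1) := by
  apply (beta_integrable one_pos (by linarith : (0:ℝ) < 1 - α)).congr_fun _ measurableSet_Ioo
  intro u _
  norm_num [Real.rpow_zero]

lemma u_rpow_le {u : ℝ} (hu0 : 0 ≤ u) (hu1 : u ≤ 1) (h₀ : 0 < α₀) (h₀1 : α₀ < 1) :
    u ≤ u ^ α₀ := by
  rcases eq_or_lt_of_le hu0 with h | h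
  · rw [← h, Real.zero_rpow h₀.ne']
  · calc u = u ^ (1:ℝ) := (Real.rpow_one u).symm
      _ ≤ u ^ α₀ := Real.rpow_le_rpow_of_exponent_ge h hu1 h₀1.le

lemma u_rpow_le_one {u : ℝ} (hu0 : 0 ≤ u) (hu1 : u ≤ 1) (h₀ : 0 < α₀) : u ^ α₀ ≤ 1 :=
  Real.rpow_le_one hu0 hu1 h₀.le

include hα hα1 h₀ h₀1 in
lemma int_J : IntegrableOn (fun u : ℝ => (1 - u ^ α₀) * (1-u) ^ (-1-α)) (Ioo (0:ℝ) 1) := by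
  apply Integrable.mono' (int_W hα hα1)
  · apply ContinuousOn.aestronglyMeasurable _ measurableSet_Ioo
    apply ContinuousOn.mul
    · apply ContinuousOn.sub continuousOn_const
      intro u _
      exact (Real.continuousAt_rpow_const u α₀ (Or.inr h₀.le)).continuousWithinAt
    · intro u hu
      exact (Real.continuousAt_rpow_const _ _
        (Or.inl (ne_of_gt (by linarith [hu.2] : (0:ℝ) < 1-u)))).comp
        ((continuous_const.sub continuous_id).continuousAt) |>.continuousWithinAt
  · filter_upwards [ae_restrict_mem measurableSet_Ioo] with u hu
    have hu0 : 0 < u := hu.1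
    have hu1 : u < 1 := hu.2
    have h1 : 0 ≤ 1 - u ^ α₀ := by linarith [u_rpow_le_one hu0.le hu1.le h₀]
    have h2 : 1 - u ^ α₀ ≤ 1 - u := by linarith [u_rpow_le hu0.le hu1.le h₀ h₀1]
    rw [Real.norm_eq_abs, abs_of_nonneg (mul_nonneg h1 (Real.rpow_nonneg (by linarith) _))]
    calc (1 - u ^ α₀) * (1-u) ^ (-1-α) ≤ (1-u) * (1-u) ^ (-1-α) :=
          mul_le_mul_of_nonneg_right h2 (Real.rpow_nonneg (by linarith) _)
      _ = (1-u) ^ (-α) := by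
          rw [show (-α:ℝ) = 1 + (-1-α) by ring, Real.rpow_add (by linarith), Real.rpow_one]
end

lemma val_J {α α₀ : ℝ} (hα : 0 < α) (hα1 : α < 1) (h₀ : 0 < α₀) (h₀1 : α₀ < 1) :
    ∫ u in Ioo (0:ℝ) 1, (1 - u ^ α₀) * (1-u) ^ (-1-α)
      = -(1/α) + α₀/α * (Real.Gamma α₀ * Real.Gamma (1-α) / Real.Gamma (1+α₀-α)) := by
  set F : ℝ → ℝ := fun u => -(1/α) * ((1 - u ^ α₀) * (1-u) ^ (-α)) with hF
  set G' : ℝ → ℝ := fun u =>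
    α₀/α * (u ^ (α₀-1) * (1-u) ^ (-α)) - (1 - u ^ α₀) * (1-u) ^ (-1-α) with hG'
  have hF0 : F 0 = -(1/α) := by
    simp [hF, Real.zero_rpow h₀.ne']
  have hF1 : F 1 = 0 := by simp [hF]
  -- continuity on Icc 0 1
  have hcont : ContinuousOn F (Icc 0 1) := by
    intro u hu
    rcases eq_or_lt_of_le hu.2 with h | h
    · -- u = 1
      rw [ContinuousWithinAt, h, hF1]
      apply squeeze_zero_norm' (a := fun u : ℝ => (1/α) * (1-u) ^ (1-α))
      · filter_upwards [self_mem_nhdsWithin] with v hv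
        have hv0 : (0:ℝ) ≤ v := hv.1
        have hv1 : v ≤ 1 := hv.2
        have h1 : 0 ≤ 1 - v ^ α₀ := by linarith [u_rpow_le_one hv0 hv1 h₀]
        have h2 : 1 - v ^ α₀ ≤ 1 - v := by linarith [u_rpow_le hv0 hv1 h₀ h₀1]
        have h3 : (1 - v ^ α₀) * (1-v) ^ (-α) ≤ (1-v) ^ (1-α) := by
          rcases eq_or_lt_of_le hv1 with hv1' | hv1'
          · rw [hv1']
            norm_num [Real.one_rpow, Real.zero_rpow (show ((-α):ℝ) ≠ 0 by linarith),
              Real.zero_rpow (show ((1-α):ℝ) ≠ 0 by linarith)]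
          · calc (1 - v ^ α₀) * (1-v) ^ (-α) ≤ (1-v) * (1-v) ^ (-α) :=
                mul_le_mul_of_nonneg_right h2 (Real.rpow_nonneg (by linarith) _)
              _ = (1-v) ^ (1-α) := by
                rw [show (1-α:ℝ) = 1 + (-α) by ring, Real.rpow_add (by linarith),
                  Real.rpow_one]
        rw [hF, Real.norm_eq_abs, abs_mul, abs_neg,
          abs_of_nonneg (by positivity : (0:ℝ) ≤ 1/α),
          abs_of_nonneg (mul_nonneg h1 (Real.rpow_nonneg (by linarith) _))]
        exact mul_le_mul_of_nonneg_left h3 (by positivity)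
      · have hc : ContinuousAt (fun u : ℝ => (1/α) * (1-u) ^ (1-α)) 1 := by
          apply ContinuousAt.mul continuousAt_const
          have hlin : ContinuousAt (fun u : ℝ => 1-u) 1 :=
            (continuous_const.sub continuous_id).continuousAt
          have hout : ContinuousAt (fun x : ℝ => x ^ (1-α)) ((fun u : ℝ => 1-u) 1) := by
            simpa using Real.continuousAt_rpow_const 0 _ (Or.inr (by linarith : (0:ℝ) ≤ 1-α))
          exact hout.comp hlin
        have h0 : 1/α * ((1:ℝ)-1) ^ (1-α) = 0 := by
          rw [sub_self, Real.zero_rpow (by linarith : (1-α:ℝ) ≠ 0), mul_zero]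
        have ht := hc.tendsto
        simp only [sub_self] at ht h0 ⊢
        rw [h0] at ht
        exact ht.mono_left nhdsWithin_le_nhds
    · -- u < 1
      have c1 : ContinuousAt (fun u : ℝ => u ^ α₀) u :=
        Real.continuousAt_rpow_const u α₀ (Or.inr h₀.le)
      have c2 : ContinuousAt (fun u : ℝ => (1-u) ^ (-α)) u :=
        (Real.continuousAt_rpow_const _ _
          (Or.inl (ne_of_gt (by linarith : (0:ℝ) < 1-u)))).comp
          ((continuous_const.sub continuous_id).continuousAt)
      exact ((continuousAt_const.mul ((continuousAt_const.sub c1).mul c2))).continuousWithinAt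
  -- derivative on Ioo 0 1
  have hderiv : ∀ u ∈ Ioo (0:ℝ) 1, HasDerivAt F (G' u) u := by
    intro u hu
    have hu0 : (0:ℝ) < u := hu.1
    have hu1 : u < 1 := hu.2
    have d1 : HasDerivAt (fun u : ℝ => 1 - u ^ α₀) (-(α₀ * u ^ (α₀-1))) u := by
      simpa using (Real.hasDerivAt_rpow_const (x := u) (p := α₀)
        (Or.inl hu0.ne')).const_sub 1
    have dbase : HasDerivAt (fun u : ℝ => 1 - u) (-1) u := by
      simpa using (hasDerivAt_id u).const_sub 1
    have d2 : HasDerivAt (fun u : ℝ => (1-u) ^ (-α))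
        (-1 * (-α) * (1-u) ^ (-α-1)) u :=
      dbase.rpow_const (Or.inl (ne_of_gt (by linarith : (0:ℝ) < 1-u)))
    have := (d1.mul d2).const_mul (-(1/α))
    refine HasDerivAt.congr_deriv this ?_
    symm
    have hrw : (1-u) ^ (-α-1) = (1-u) ^ (-1-α) := by
      rw [show (-α-1:ℝ) = -1-α by ring]
    rw [hG']
    simp only [hrw]
    field_simp
    ring
  -- interval integrability of G'
  have hGint : IntervalIntegrable G' volume 0 1 := by
    rw [intervalIntegrable_iff_integrableOn_Ioc_of_le (by norm_num : (0:ℝ) ≤ 1)]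
    apply IntegrableOn.congr_set_ae _ (MeasureTheory.Ioo_ae_eq_Ioc (a := (0:ℝ)) (b := 1)).symm
    exact ((int_beta1 hα hα1 h₀).const_mul (α₀/α)).sub (int_J hα hα1 h₀ h₀1)
  have key := intervalIntegral.integral_eq_sub_of_hasDerivAt_of_le
    (by norm_num : (0:ℝ) ≤ 1) hcont hderiv hGint
  rw [hF1, hF0, sub_neg_eq_add, zero_add] at key
  rw [intervalIntegral.integral_of_le (by norm_num : (0:ℝ) ≤ 1),
    integral_Ioc_eq_integral_Ioo] at key
  have hsplit : ∫ u in Ioo (0:ℝ) 1, G' u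
      = α₀/α * (∫ u in Ioo (0:ℝ) 1, u ^ (α₀-1) * (1-u) ^ (-α))
        - ∫ u in Ioo (0:ℝ) 1, (1 - u ^ α₀) * (1-u) ^ (-1-α) := by
    rw [hG', integral_sub (((int_beta1 hα hα1 h₀).const_mul (α₀/α))) (int_J hα hα1 h₀ h₀1),
      integral_const_mul]
  rw [key, val_beta1 hα hα1 h₀] at hsplit
  linarith [hsplit]

lemma bracket_nonneg {u y : ℝ} (hu0 : 0 < u) (hu1 : u < 1) (hy : 0 < y) :
    0 ≤ (1 - Real.exp (-(u*y)))/u - (Real.exp (-(u*y)) - Real.exp (-y))/(1-u) := by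
  have h1u : (0:ℝ) < 1 - u := by linarith
  set t := Real.exp (-y) with ht
  have ht0 : 0 < t := Real.exp_pos _
  have hexp : Real.exp (-(u*y)) = t ^ u := by
    rw [ht, ← Real.exp_mul]
    congr 1
    ring
  have key : t ^ u ≤ u * t + (1-u) := by
    have := Real.geom_mean_le_arith_mean2_weighted hu0.le h1u.le ht0.le zero_le_one
      (by ring : u + (1-u) = 1)
    simpa using this
  rw [hexp, div_sub_div _ _ hu0.ne' h1u.ne']
  apply div_nonneg _ (by positivity)
  nlinarith [key]

section
variable {α α₀ : ℝ} (hα : 0 < α) (hα1 : α < 1) (h₀ : 0 < α₀) (h₀1 : α₀ < 1)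

-- the integrand
noncomputable def KRf (α α₀ : ℝ) (u y : ℝ) : ℝ :=
  ((1 - Real.exp (-(u * y))) / u - (Real.exp (-(u * y)) - Real.exp (-y)) / (1 - u)) *
    (1 - u) ^ (-α) * y ^ (-1 - α₀)

lemma KRf_decomp {u : ℝ} (hu0 : 0 < u) (hu1 : u < 1) (y : ℝ) :
    KRf α α₀ u y
      = ((1-u) ^ (-α) * (1/u + 1/(1-u))) * ((1 - Real.exp (-(u*y))) * y ^ (-1-α₀))
        - ((1-u) ^ (-α) * (1/(1-u))) * ((1 - Real.exp (-(1*y))) * y ^ (-1-α₀)) := by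
  have h1u : (0:ℝ) < 1 - u := by linarith
  rw [KRf, one_mul]
  field_simp
  ring

include hα hα1 h₀ h₀1 in
lemma KRf_int_slice {u : ℝ} (hu0 : 0 < u) (hu1 : u < 1) :
    Integrable (KRf α α₀ u) (volume.restrict (Ioi (0:ℝ))) := by
  have h1 := ((phi_int h₀ h₀1 hu0).const_mul ((1-u) ^ (-α) * (1/u + 1/(1-u))))
  have h2 := ((phi_int h₀ h₀1 one_pos).const_mul ((1-u) ^ (-α) * (1/(1-u))))
  exact (h1.sub h2).congr (ae_of_all _ fun y => (KRf_decomp hu0 hu1 y).symm)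

include hα hα1 h₀ h₀1 in
lemma KRf_val_slice {u : ℝ} (hu0 : 0 < u) (hu1 : u < 1) :
    ∫ y in Ioi (0:ℝ), KRf α α₀ u y
      = Real.Gamma (1-α₀)/α₀ *
          (u ^ (α₀-1) * (1-u) ^ (-α) - (1 - u ^ α₀) * (1-u) ^ (-1-α)) := by
  have h1u : (0:ℝ) < 1 - u := by linarith
  have hcongr : ∫ y in Ioi (0:ℝ), KRf α α₀ u y
      = ∫ y in Ioi (0:ℝ),
          (((1-u) ^ (-α) * (1/u + 1/(1-u))) * ((1 - Real.exp (-(u*y))) * y ^ (-1-α₀))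
           - ((1-u) ^ (-α) * (1/(1-u))) * ((1 - Real.exp (-(1*y))) * y ^ (-1-α₀))) :=
    integral_congr_ae (ae_of_all _ fun y => KRf_decomp hu0 hu1 y)
  rw [hcongr, integral_sub
      (((phi_int h₀ h₀1 hu0).const_mul _)) (((phi_int h₀ h₀1 one_pos).const_mul _)),
    integral_const_mul, integral_const_mul, phi_val h₀ h₀1 hu0, phi_val h₀ h₀1 one_pos,
    Real.one_rpow]
  have e1 : u ^ (α₀-1) = u ^ α₀ / u := by
    rw [Real.rpow_sub hu0, Real.rpow_one]
  have e2 : (1-u) ^ (-1-α) = (1-u) ^ (-α) / (1-u) := by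
    rw [show (-1-α:ℝ) = -α - 1 by ring, Real.rpow_sub h1u, Real.rpow_one]
  rw [e1, e2]
  field_simp
  ring

include hα hα1 h₀ h₀1 in
lemma KRf_nonneg {u : ℝ} (hu0 : 0 < u) (hu1 : u < 1) {y : ℝ} (hy : 0 < y) :
    0 ≤ KRf α α₀ u y := by
  apply mul_nonneg (mul_nonneg (bracket_nonneg hu0 hu1 hy)
    (Real.rpow_nonneg (by linarith) _)) (Real.rpow_nonneg hy.le _)
end



/-- the explicit double-integral evaluation from the computation of
E[U_t(α)+V_t(α)] for the Karlin–Rouault score statistic. -/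
theorem double_integral_KR_score (α α₀ : ℝ) (hα : α ∈ Set.Ioo (0 : ℝ) 1)
    (hα₀ : α₀ ∈ Set.Ioo (0 : ℝ) 1) :
    (∫ y in Set.Ioi (0 : ℝ), ∫ u in Set.Ioo (0 : ℝ) 1,
        ((1 - Real.exp (-(u * y))) / u - (Real.exp (-(u * y)) - Real.exp (-y)) / (1 - u)) *
          (1 - u) ^ (-α) * y ^ (-1 - α₀)) =
      Real.Gamma (1 - α₀) / α₀ *
        (1 / α + (1 - α₀ / α) * (Real.Gamma (1 - α) * Real.Gamma α₀ /
          Real.Gamma (1 + α₀ - α))) := by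
  obtain ⟨hα0, hα1⟩ := hα
  obtain ⟨h₀0, h₀1⟩ := hα₀
  show (∫ y in Set.Ioi (0 : ℝ), ∫ u in Set.Ioo (0 : ℝ) 1, KRf α α₀ u y) = _
  have hS : MeasurableSet (Ioo (0:ℝ) 1 ×ˢ Ioi (0:ℝ)) :=
    measurableSet_Ioo.prod measurableSet_Ioi
  have hmeas : AEStronglyMeasurable (Function.uncurry (KRf α α₀))
      ((volume.restrict (Ioo (0:ℝ) 1)).prod (volume.restrict (Ioi (0:ℝ)))) := by
    rw [Measure.prod_restrict]
    apply ContinuousOn.aestronglyMeasurable _ hS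
    intro p hp
    have hu0 : 0 < p.1 := hp.1.1
    have hu1 : p.1 < 1 := hp.1.2
    have hy : 0 < p.2 := hp.2
    apply ContinuousAt.continuousWithinAt
    have c1 : ContinuousAt (fun p : ℝ×ℝ => Real.exp (-(p.1*p.2))) p := by fun_prop
    have c2 : ContinuousAt (fun p : ℝ×ℝ => Real.exp (-p.2)) p := by fun_prop
    have c3 : ContinuousAt (fun p : ℝ×ℝ => (1-p.1) ^ (-α)) p :=
      ContinuousAt.rpow_const (f := fun q : ℝ×ℝ => 1 - q.1) (by fun_prop)
        (Or.inl (ne_of_gt (by linarith : (0:ℝ) < 1 - p.1)))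
    have c4 : ContinuousAt (fun p : ℝ×ℝ => p.2 ^ (-1-α₀)) p :=
      ContinuousAt.rpow_const (f := fun q : ℝ×ℝ => q.2) (by fun_prop)
        (Or.inl hy.ne')
    have c5 : ContinuousAt (fun p : ℝ×ℝ => (1 - Real.exp (-(p.1*p.2))) / p.1) p :=
      (continuousAt_const.sub c1).div continuous_fst.continuousAt hu0.ne'
    have c6 : ContinuousAt
        (fun p : ℝ×ℝ => (Real.exp (-(p.1*p.2)) - Real.exp (-p.2)) / (1-p.1)) p :=
      (c1.sub c2).div (continuous_const.sub continuous_fst).continuousAt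
        (ne_of_gt (by linarith : (0:ℝ) < 1 - p.1))
    exact ((c5.sub c6).mul c3).mul c4
  have hInt : Integrable (Function.uncurry (KRf α α₀))
      ((volume.restrict (Ioo (0:ℝ) 1)).prod (volume.restrict (Ioi (0:ℝ)))) := by
    rw [integrable_prod_iff hmeas]
    constructor
    · filter_upwards [ae_restrict_mem measurableSet_Ioo] with u hu
      exact KRf_int_slice hα0 hα1 h₀0 h₀1 hu.1 hu.2
    · apply Integrable.congr
        (((int_beta1 hα0 hα1 h₀0).sub (int_J hα0 hα1 h₀0 h₀1)).const_mul
          (Real.Gamma (1-α₀)/α₀))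
      filter_upwards [ae_restrict_mem measurableSet_Ioo] with u hu
      have h2 : ∫ y, ‖KRf α α₀ u y‖ ∂(volume.restrict (Ioi (0:ℝ)))
          = ∫ y, KRf α α₀ u y ∂(volume.restrict (Ioi (0:ℝ))) := by
        apply integral_congr_ae
        filter_upwards [ae_restrict_mem measurableSet_Ioi] with y hy
        exact norm_of_nonneg (KRf_nonneg hα0 hα1 h₀0 h₀1 hu.1 hu.2 hy)
      have h3 := KRf_val_slice hα0 hα1 h₀0 h₀1 hu.1 hu.2
      simp only [Pi.sub_apply, Function.uncurry_apply_pair]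
      rw [h2, h3]
  have hswap := integral_integral_swap hInt
  rw [← hswap]
  have hval : ∫ u in Ioo (0:ℝ) 1, (∫ y in Ioi (0:ℝ), KRf α α₀ u y)
      = ∫ u in Ioo (0:ℝ) 1, Real.Gamma (1-α₀)/α₀ *
          (u ^ (α₀-1) * (1-u) ^ (-α) - (1 - u ^ α₀) * (1-u) ^ (-1-α)) := by
    apply setIntegral_congr_fun measurableSet_Ioo
    intro u hu
    exact KRf_val_slice hα0 hα1 h₀0 h₀1 hu.1 hu.2
  rw [hval, integral_const_mul,
    integral_sub (int_beta1 hα0 hα1 h₀0) (int_J hα0 hα1 h₀0 h₀1),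
    val_beta1 hα0 hα1 h₀0, val_J hα0 hα1 h₀0 h₀1]
  ring
end

section
/- Let (f_j)_{j≥1} be a probability mass function on the positive integers such that f₁ < 1 and 1 − ∑_{k=1}^{j} f_k ∼ L·j^{−α₁} as j → ∞, for some α₁ ∈ (0,1) and L > 0. Then the equation ∑_{j≥1} f_j ∑_{k=1}^{j−1} α/(k−α) = 1 has a unique solution α₀ in (0,1). -/
open Filter Asymptotics

private lemma cm_ratio_mono {k : ℕ} (hk : 1 ≤ k) {x y : ℝ} (hx : 0 < x) (hxy : x ≤ y)
    (hy : y < 1) : x / ((k : ℝ) - x) ≤ y / ((k : ℝ) - y) := by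
  have hk1 : (1 : ℝ) ≤ (k : ℝ) := by exact_mod_cast hk
  have h1 : (0 : ℝ) < (k : ℝ) - x := by nlinarith
  have h2 : (0 : ℝ) < (k : ℝ) - y := by nlinarith
  rw [div_le_div_iff₀ h1 h2]
  nlinarith

private lemma cm_ratio_strict {k : ℕ} (hk : 1 ≤ k) {x y : ℝ} (hx : 0 < x) (hxy : x < y)
    (hy : y < 1) : x / ((k : ℝ) - x) < y / ((k : ℝ) - y) := by
  have hk1 : (1 : ℝ) ≤ (k : ℝ) := by exact_mod_cast hk
  have h1 : (0 : ℝ) < (k : ℝ) - x := by nlinarith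
  have h2 : (0 : ℝ) < (k : ℝ) - y := by nlinarith
  rw [div_lt_div_iff₀ h1 h2]
  nlinarith

private lemma cm_ratio_nonneg {k : ℕ} (hk : 1 ≤ k) {x : ℝ} (hx : 0 ≤ x)
    (hx1 : x < 1) : 0 ≤ x / ((k : ℝ) - x) := by
  have hk1 : (1 : ℝ) ≤ (k : ℝ) := by exact_mod_cast hk
  have h1 : (0 : ℝ) < (k : ℝ) - x := by nlinarith
  positivity

private lemma cm_g_nonneg (f : ℕ → ℝ) (hnn : ∀ j, 0 ≤ f j) {x : ℝ} (hx : 0 ≤ x) (hx1 : x < 1)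
    (j : ℕ) : 0 ≤ f j * ∑ k ∈ Finset.Icc 1 (j - 1), x / ((k : ℝ) - x) := by
  apply mul_nonneg (hnn j)
  apply Finset.sum_nonneg
  intro k hk
  exact cm_ratio_nonneg (Finset.mem_Icc.1 hk).1 hx hx1

private lemma cm_g_le (f : ℕ → ℝ) (hnn : ∀ j, 0 ≤ f j) {x : ℝ} (hx : 0 ≤ x) (hx1 : x < 1)
    (j : ℕ) : f j * ∑ k ∈ Finset.Icc 1 (j - 1), x / ((k : ℝ) - x) ≤
      (x / (1 - x)) * (f j * ∑ k ∈ Finset.Icc 1 (j - 1), (1 / (k : ℝ))) := by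
  have key : ∑ k ∈ Finset.Icc 1 (j - 1), x / ((k : ℝ) - x) ≤
      (x / (1 - x)) * ∑ k ∈ Finset.Icc 1 (j - 1), (1 / (k : ℝ)) := by
    rw [Finset.mul_sum]
    apply Finset.sum_le_sum
    intro k hk
    have hk1 : (1 : ℝ) ≤ (k : ℝ) := by exact_mod_cast (Finset.mem_Icc.1 hk).1
    have h1 : (0 : ℝ) < (k : ℝ) - x := by nlinarith
    have h2 : (0 : ℝ) < 1 - x := by linarith
    have h3 : (0 : ℝ) < (k : ℝ) := by linarith
    have : x / (1 - x) * (1 / (k : ℝ)) = x / ((1 - x) * (k : ℝ)) := by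
      field_simp
    rw [this, div_le_div_iff₀ h1 (by positivity)]
    nlinarith [mul_nonneg (mul_nonneg hx hx) (by linarith : (0:ℝ) ≤ (k:ℝ) - 1)]
  calc f j * ∑ k ∈ Finset.Icc 1 (j - 1), x / ((k : ℝ) - x)
      ≤ f j * ((x / (1 - x)) * ∑ k ∈ Finset.Icc 1 (j - 1), (1 / (k : ℝ))) :=
        mul_le_mul_of_nonneg_left key (hnn j)
    _ = (x / (1 - x)) * (f j * ∑ k ∈ Finset.Icc 1 (j - 1), (1 / (k : ℝ))) := by ring

private lemma cm_summable_u (f : ℕ → ℝ) (hnn : ∀ j, 0 ≤ f j) (hf0 : f 0 = 0)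
    (hsum : ∑' j : ℕ, f j = 1) (hSf : Summable f)
    (L α₁ : ℝ) (hα₁ : α₁ ∈ Set.Ioo (0 : ℝ) 1) (hL : 0 < L)
    (htail : (fun j : ℕ => 1 - ∑ k ∈ Finset.Icc 1 j, f k)
        ~[atTop] fun j : ℕ => L * (j : ℝ) ^ (-α₁)) :
    Summable (fun j : ℕ => f j * ∑ k ∈ Finset.Icc 1 (j - 1), (1 / (k : ℝ))) := by
  set T : ℕ → ℝ := fun n => 1 - ∑ k ∈ Finset.Icc 1 n, f k with hT
  have hTnn : ∀ n, 0 ≤ T n := by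
    intro n
    have := Summable.sum_le_tsum (Finset.Icc 1 n) (fun i _ => hnn i) hSf
    simp only [hT]
    rw [hsum] at this
    linarith
  have htailsum : ∀ k m : ℕ, ∑ j ∈ Finset.Icc (k + 1) m, f j ≤ T k := by
    intro k m
    rcases le_or_gt m k with h | h
    · rw [Finset.Icc_eq_empty (by omega)]
      simpa using hTnn k
    · have hsplit : ∑ i ∈ Finset.Ioc 0 k, f i + ∑ i ∈ Finset.Ioc k m, f i
          = ∑ i ∈ Finset.Ioc 0 m, f i :=
        Finset.sum_Ioc_consecutive f (Nat.zero_le k) (le_of_lt h)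
      have e1 : Finset.Icc 1 k = Finset.Ioc 0 k := Finset.Icc_add_one_left_eq_Ioc 0 k
      have e2 : Finset.Icc (k + 1) m = Finset.Ioc k m := Finset.Icc_add_one_left_eq_Ioc k m
      have e3 : Finset.Icc 1 m = Finset.Ioc 0 m := Finset.Icc_add_one_left_eq_Ioc 0 m
      have hle : ∑ i ∈ Finset.Icc 1 m, f i ≤ 1 := by
        have := Summable.sum_le_tsum (Finset.Icc 1 m) (fun i _ => hnn i) hSf
        rwa [hsum] at this
      simp only [hT]
      rw [e2]
      rw [e1] at *
      rw [e3] at hle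
      linarith
  set v : ℕ → ℝ := fun k => T k * (1 / (k : ℝ)) with hv
  have hvnn : ∀ k, 0 ≤ v k := by
    intro k
    apply mul_nonneg (hTnn k)
    positivity
  have hvsum : Summable v := by
    have hO1 : T =O[atTop] (fun n : ℕ => (n : ℝ) ^ (-α₁)) :=
      htail.isBigO.trans (isBigO_const_mul_self L _ atTop)
    have hO2 : v =O[atTop] (fun n : ℕ => (n : ℝ) ^ (-(1 + α₁))) := by
      have h1 : v =O[atTop] (fun n : ℕ => (n : ℝ) ^ (-α₁) * (1 / (n : ℝ))) :=
        hO1.mul (isBigO_refl (fun n : ℕ => 1 / (n : ℝ)) atTop)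
      apply h1.trans_eventuallyEq
      filter_upwards [eventually_ge_atTop 1] with n hn
      have hn0 : (0 : ℝ) < (n : ℝ) := by exact_mod_cast hn
      rw [show (-(1 + α₁)) = -α₁ + (-1) by ring, Real.rpow_add hn0, Real.rpow_neg_one,
        inv_eq_one_div]
    exact summable_of_isBigO_nat (Real.summable_nat_rpow.2 (by linarith [hα₁.1])) hO2
  apply summable_of_sum_range_le (c := ∑' k, v k)
  · intro n
    apply mul_nonneg (hnn n)
    apply Finset.sum_nonneg
    intro k hk
    positivity
  · intro N
    have step1 : ∀ j ∈ Finset.range N,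
        f j * ∑ k ∈ Finset.Icc 1 (j - 1), (1 / (k : ℝ))
          = ∑ k ∈ Finset.Icc 1 N, (if k ∈ Finset.Icc 1 (j - 1) then f j * (1 / (k : ℝ)) else 0) := by
      intro j hj
      rw [Finset.sum_ite_mem]
      rw [Finset.inter_eq_right.mpr
        (Finset.Icc_subset_Icc_right (by have := Finset.mem_range.1 hj; omega))]
      rw [Finset.mul_sum]
    rw [Finset.sum_congr rfl step1, Finset.sum_comm]
    have step2 : ∀ k ∈ Finset.Icc 1 N,
        (∑ j ∈ Finset.range N, (if k ∈ Finset.Icc 1 (j - 1) then f j * (1 / (k : ℝ)) else 0))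
          ≤ v k := by
      intro k hk
      have hk1 : 1 ≤ k := (Finset.mem_Icc.1 hk).1
      have hkR : (0 : ℝ) < (k : ℝ) := by exact_mod_cast hk1
      calc (∑ j ∈ Finset.range N, (if k ∈ Finset.Icc 1 (j - 1) then f j * (1 / (k : ℝ)) else 0))
          ≤ ∑ j ∈ Finset.range N, (if j ∈ Finset.Icc (k + 1) N then f j * (1 / (k : ℝ)) else 0) := by
            apply Finset.sum_le_sum
            intro j hj
            by_cases hc : k ∈ Finset.Icc 1 (j - 1)
            · rw [if_pos hc, if_pos]
              simp only [Finset.mem_Icc] at hc ⊢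
              have := Finset.mem_range.1 hj
              omega
            · rw [if_neg hc]
              split
              · exact mul_nonneg (hnn j) (by positivity)
              · exact le_refl 0
        _ = ∑ j ∈ Finset.range N ∩ Finset.Icc (k + 1) N, f j * (1 / (k : ℝ)) :=
            Finset.sum_ite_mem _ _ _
        _ ≤ ∑ j ∈ Finset.Icc (k + 1) N, f j * (1 / (k : ℝ)) := by
            apply Finset.sum_le_sum_of_subset_of_nonneg (Finset.inter_subset_right)
            intro j _ _
            exact mul_nonneg (hnn j) (by positivity)
        _ = (∑ j ∈ Finset.Icc (k + 1) N, f j) * (1 / (k : ℝ)) := by rw [Finset.sum_mul]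
        _ ≤ T k * (1 / (k : ℝ)) :=
            mul_le_mul_of_nonneg_right (htailsum k N) (by positivity)
        _ = v k := rfl
    calc ∑ k ∈ Finset.Icc 1 N,
          (∑ j ∈ Finset.range N, (if k ∈ Finset.Icc 1 (j - 1) then f j * (1 / (k : ℝ)) else 0))
        ≤ ∑ k ∈ Finset.Icc 1 N, v k := Finset.sum_le_sum step2
      _ ≤ ∑' k, v k := Summable.sum_le_tsum _ (fun i _ => hvnn i) hvsum

/-- for a pmf (f_j)_{j≥1} with f₁ < 1 and regularly varying tail
1 − ∑_{k≤j} f_k ∼ L·j^{−α₁}, the equation ∑_j f_j ∑_{k=1}^{j−1} α/(k−α) = 1 has a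
unique solution α₀ ∈ (0,1). -/
theorem configuration_model_alpha0 (f : ℕ → ℝ) (hnn : ∀ j, 0 ≤ f j) (hf0 : f 0 = 0)
    (hsum : ∑' j : ℕ, f j = 1) (hf1 : f 1 < 1)
    (L α₁ : ℝ) (hα₁ : α₁ ∈ Set.Ioo (0 : ℝ) 1) (hL : 0 < L)
    (htail : (fun j : ℕ => 1 - ∑ k ∈ Finset.Icc 1 j, f k)
        ~[atTop] fun j : ℕ => L * (j : ℝ) ^ (-α₁)) :
    ∃! α : ℝ, α ∈ Set.Ioo (0 : ℝ) 1 ∧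
      ∑' j : ℕ, f j * ∑ k ∈ Finset.Icc 1 (j - 1), α / ((k : ℝ) - α) = 1 := by
  have hSf : Summable f := by
    by_contra h
    rw [tsum_eq_zero_of_not_summable h] at hsum
    norm_num at hsum
  set u : ℕ → ℝ := fun j => f j * ∑ k ∈ Finset.Icc 1 (j - 1), (1 / (k : ℝ)) with hu
  have hSu : Summable u := cm_summable_u f hnn hf0 hsum hSf L α₁ hα₁ hL htail
  have hunn : ∀ j, 0 ≤ u j := by
    intro j
    apply mul_nonneg (hnn j)
    apply Finset.sum_nonneg
    intro k hk
    positivity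
  set F : ℝ → ℝ := fun z => ∑' j : ℕ, f j * ∑ k ∈ Finset.Icc 1 (j - 1), z / ((k : ℝ) - z)
    with hF
  set g : ℝ → ℕ → ℝ := fun z j => f j * ∑ k ∈ Finset.Icc 1 (j - 1), z / ((k : ℝ) - z) with hg
  have hSg : ∀ z : ℝ, 0 < z → z < 1 → Summable (g z) := by
    intro z hz0 hz1
    exact Summable.of_nonneg_of_le (cm_g_nonneg f hnn hz0.le hz1)
      (cm_g_le f hnn hz0.le hz1) (hSu.mul_left (z / (1 - z)))
  -- existence of j0 ≥ 2 with f j0 > 0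
  obtain ⟨j0, hj02, hj0pos⟩ : ∃ j, 2 ≤ j ∧ 0 < f j := by
    by_contra h
    push_neg at h
    have hzero : ∀ b : ℕ, b ∉ ({0, 1} : Finset ℕ) → f b = 0 := by
      intro b hb
      have hb2 : 2 ≤ b := by simp at hb; omega
      exact le_antisymm (h b hb2) (hnn b)
    have := tsum_eq_sum (L := SummationFilter.unconditional ℕ) hzero
    rw [hsum] at this
    simp [hf0] at this
    linarith
  -- strict monotonicity
  have hstrict : ∀ x y : ℝ, 0 < x → x < y → y < 1 → F x < F y := by
    intro x y hx0 hxy hy1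
    have hx1 : x < 1 := hxy.trans hy1
    have hy0 : 0 < y := hx0.trans hxy
    have hSx := hSg x hx0 hx1
    have hSy := hSg y hy0 hy1
    have hdnn : ∀ j, 0 ≤ g y j - g x j := by
      intro j
      have : g x j ≤ g y j := by
        apply mul_le_mul_of_nonneg_left _ (hnn j)
        apply Finset.sum_le_sum
        intro k hk
        exact cm_ratio_mono (Finset.mem_Icc.1 hk).1 hx0 hxy.le hy1
      linarith
    have hdpos : 0 < g y j0 - g x j0 := by
      have hne : (Finset.Icc 1 (j0 - 1)).Nonempty := by
        rw [Finset.nonempty_Icc]; omega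
      have hlt : ∑ k ∈ Finset.Icc 1 (j0 - 1), x / ((k : ℝ) - x)
          < ∑ k ∈ Finset.Icc 1 (j0 - 1), y / ((k : ℝ) - y) := by
        apply Finset.sum_lt_sum_of_nonempty hne
        intro k hk
        exact cm_ratio_strict (Finset.mem_Icc.1 hk).1 hx0 hxy hy1
      have := mul_lt_mul_of_pos_left hlt hj0pos
      simp only [hg]
      linarith
    have hkey : g y j0 - g x j0 ≤ F y - F x := by
      rw [hF]
      rw [← Summable.tsum_sub hSy hSx]
      exact Summable.le_tsum (hSy.sub hSx) j0 (fun j _ => hdnn j)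
    linarith
  -- the upper endpoint b
  set c1 : ℝ := 1 - f 1 with hc1
  have hc1pos : 0 < c1 := by simp only [hc1]; linarith
  set b : ℝ := 2 / (c1 + 2) with hb
  have hb0 : 0 < b := by positivity
  have hb1 : b < 1 := by
    rw [hb, div_lt_one (by positivity)]
    linarith
  have h1b : 1 - b = c1 / (c1 + 2) := by
    rw [hb]; field_simp; ring
  have hbratio : b / (1 - b) = 2 / c1 := by
    rw [h1b, hb]
    field_simp
  -- lower bound at b : F b ≥ 2
  have hFb : 2 ≤ F b := by
    set h : ℕ → ℝ := fun j => if 2 ≤ j then f j else 0 with hh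
    have hhnn : ∀ j, 0 ≤ h j := by
      intro j; simp only [hh]; split
      · exact hnn j
      · exact le_refl (0:ℝ)
    have hhle : ∀ j, h j ≤ f j := by
      intro j; simp only [hh]; split
      · exact le_refl (f j)
      · exact hnn j
    have hSh : Summable h := Summable.of_nonneg_of_le hhnn hhle hSf
    have htsum_h : ∑' j, h j = c1 := by
      have hzero : ∀ j : ℕ, j ∉ ({0, 1} : Finset ℕ) → f j - h j = 0 := by
        intro j hj
        have : 2 ≤ j := by simp at hj; omega
        simp [hh, this]
      have := tsum_eq_sum (L := SummationFilter.unconditional ℕ) hzero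
      rw [Summable.tsum_sub hSf hSh, hsum] at this
      have hval : ∑ j ∈ ({0, 1} : Finset ℕ), (f j - h j) = f 1 := by
        rw [Finset.sum_pair (by norm_num)]
        simp [hh, hf0]
      rw [hval] at this
      simp only [hc1]
      linarith
    have hptwise : ∀ j, h j * (b / (1 - b)) ≤ g b j := by
      intro j
      rcases le_or_gt 2 j with h2 | h2
      · simp only [hh, if_pos h2, hg]
        have h1mem : 1 ∈ Finset.Icc 1 (j - 1) := by
          rw [Finset.mem_Icc]; omega
        have hsingle : b / (1 - b) ≤ ∑ k ∈ Finset.Icc 1 (j - 1), b / ((k : ℝ) - b) := by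
          have := Finset.single_le_sum
            (f := fun k : ℕ => b / ((k : ℝ) - b))
            (fun k hk => cm_ratio_nonneg (Finset.mem_Icc.1 hk).1 hb0.le hb1) h1mem
          simpa using this
        calc f j * (b / (1 - b)) ≤ f j * ∑ k ∈ Finset.Icc 1 (j - 1), b / ((k : ℝ) - b) :=
              mul_le_mul_of_nonneg_left hsingle (hnn j)
          _ = _ := rfl
      · simp only [hh, if_neg (by omega : ¬ 2 ≤ j)]
        rw [zero_mul]
        exact cm_g_nonneg f hnn hb0.le hb1 j
    have h2le : ∑' j, h j * (b / (1 - b)) ≤ F b :=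
      Summable.tsum_le_tsum hptwise (hSh.mul_right _) (hSg b hb0 hb1)
    rw [tsum_mul_right, htsum_h, hbratio] at h2le
    have : c1 * (2 / c1) = 2 := by field_simp
    rw [this] at h2le
    exact h2le
  -- the lower endpoint a
  set S : ℝ := ∑' j, u j with hS
  have hS0 : 0 ≤ S := tsum_nonneg hunn
  set a : ℝ := min (1 / (S + 2)) b with ha
  have ha0 : 0 < a := lt_min (by positivity) hb0
  have hab : a ≤ b := min_le_right _ _
  have ha1 : a < 1 := lt_of_le_of_lt hab hb1
  have hFa : F a < 1 := by
    have hbound : F a ≤ (a / (1 - a)) * S := by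
      have := Summable.tsum_le_tsum (cm_g_le f hnn ha0.le ha1) (hSg a ha0 ha1)
        (hSu.mul_left (a / (1 - a)))
      rwa [tsum_mul_left] at this
    have ha2 : a * (S + 2) ≤ 1 := by
      have := min_le_left (1 / (S + 2)) b
      rw [← ha] at this
      rw [le_div_iff₀ (by positivity)] at this
      linarith
    have h1a : 0 < 1 - a := by linarith
    have : (a / (1 - a)) * S < 1 := by
      rw [div_mul_eq_mul_div, div_lt_one h1a]
      nlinarith
    linarith
  -- IVT
  have hφcont : Continuous (fun x : ℝ => max a (min x b)) :=
    continuous_const.max (continuous_id.min continuous_const)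
  have hφmem : ∀ x : ℝ, a ≤ max a (min x b) ∧ max a (min x b) ≤ b := by
    intro x
    constructor
    · exact le_max_left _ _
    · exact max_le hab (min_le_right _ _)
  have hφ0 : ∀ x : ℝ, 0 < max a (min x b) := fun x => lt_of_lt_of_le ha0 (hφmem x).1
  have hφ1 : ∀ x : ℝ, max a (min x b) < 1 := fun x => lt_of_le_of_lt (hφmem x).2 hb1
  have hHcont : Continuous (fun x : ℝ => F (max a (min x b))) := by
    simp only [hF]
    apply continuous_tsum (u := fun j => (b / (1 - b)) * u j)
    · intro j
      apply continuous_const.mul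
      apply continuous_finset_sum
      intro k hk
      have hk1 : (1 : ℝ) ≤ (k : ℝ) := by exact_mod_cast (Finset.mem_Icc.1 hk).1
      apply Continuous.div hφcont (continuous_const.sub hφcont)
      intro x
      have := hφ1 x
      intro hzero
      simp only [Pi.sub_apply] at hzero
      nlinarith [hφ0 x]
    · exact hSu.mul_left _
    · intro j x
      rw [Real.norm_of_nonneg (cm_g_nonneg f hnn (hφ0 x).le (hφ1 x) j)]
      calc f j * ∑ k ∈ Finset.Icc 1 (j - 1), (max a (min x b)) / ((k : ℝ) - max a (min x b))
          ≤ (max a (min x b) / (1 - max a (min x b))) * u j :=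
            cm_g_le f hnn (hφ0 x).le (hφ1 x) j
        _ ≤ (b / (1 - b)) * u j := by
            apply mul_le_mul_of_nonneg_right _ (hunn j)
            have h1 : 0 < 1 - max a (min x b) := by linarith [hφ1 x]
            have h2 : 0 < 1 - b := by linarith
            rw [div_le_div_iff₀ h1 h2]
            nlinarith [(hφmem x).2, hφ0 x, hb0]
  have hFcont : ContinuousOn F (Set.Icc a b) := by
    apply ContinuousOn.congr hHcont.continuousOn
    intro x hx
    show F x = F (max a (min x b))
    rw [min_eq_left hx.2, max_eq_right hx.1]
  have hmem : (1 : ℝ) ∈ Set.Icc (F a) (F b) := ⟨hFa.le, by linarith⟩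
  obtain ⟨α, hαmem, hFα⟩ := intermediate_value_Icc hab hFcont hmem
  refine ⟨α, ⟨⟨lt_of_lt_of_le ha0 hαmem.1, lt_of_le_of_lt hαmem.2 hb1⟩, hFα⟩, ?_⟩
  intro y ⟨hy, hFy⟩
  have hα0 : 0 < α := lt_of_lt_of_le ha0 hαmem.1
  have hα1 : α < 1 := lt_of_le_of_lt hαmem.2 hb1
  rcases lt_trichotomy y α with h | h | h
  · exfalso
    have := hstrict y α hy.1 h hα1
    rw [hFα] at this
    simp only [hF] at this
    rw [hFy] at this
    exact lt_irrefl 1 this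
  · exact h
  · exfalso
    have := hstrict α y hα0 h hy.2
    rw [hFα] at this
    simp only [hF] at this
    rw [hFy] at this
    exact lt_irrefl 1 this
end

section
/- Let α₀ ∈ (0,1), c₀ > 0, β > 0, and let μ : (0,∞) → [0,∞) be nonincreasing and right-continuous with μ(x) → 0 as x → ∞, and generalized inverse μ⁻¹(y) := inf{x > 0 : μ(x) ≤ y}. Assume |μ⁻¹(y) − c₀·y^{−α₀}| = O(y^{β−α₀}) as y → 0⁺. Then there exists η > 0 such that, as t → ∞: t·∫₀^∞ (1 − e^{−t·μ(x)}) dx = c₀·Γ(1−α₀)·t^{1+α₀}·(1 + O(t^{−η})) = t·μ⁻¹(1/t)·Γ(1−α₀)·(1 + O(t^{−η})). -/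
noncomputable section

open Filter MeasureTheory Set Real

def muInv (μ : ℝ → ℝ) (y : ℝ) : ℝ := sInf {x : ℝ | 0 < x ∧ μ x ≤ y}

lemma muInv_set_nonempty (μ : ℝ → ℝ) (hlim : Tendsto μ atTop (nhds 0)) {y : ℝ} (hy : 0 < y) :
    {x : ℝ | 0 < x ∧ μ x ≤ y}.Nonempty := by
  have h1 : ∀ᶠ x in atTop, μ x < y := hlim.eventually_lt_const hy
  have h2 : ∀ᶠ x : ℝ in atTop, 0 < x := eventually_gt_atTop 0
  obtain ⟨x, hx1, hx2⟩ := (h1.and h2).exists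
  exact ⟨x, hx2, hx1.le⟩

lemma muInv_bddBelow (μ : ℝ → ℝ) (y : ℝ) : BddBelow {x : ℝ | 0 < x ∧ μ x ≤ y} :=
  ⟨0, fun _ hx => hx.1.le⟩

lemma muInv_nonneg (μ : ℝ → ℝ) (hlim : Tendsto μ atTop (nhds 0)) {y : ℝ} (hy : 0 < y) :
    0 ≤ muInv μ y :=
  le_csInf (muInv_set_nonempty μ hlim hy) fun _ hx => hx.1.le

lemma muInv_anti (μ : ℝ → ℝ) (hlim : Tendsto μ atTop (nhds 0)) {y y' : ℝ} (hy : 0 < y)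
    (hyy' : y ≤ y') : muInv μ y' ≤ muInv μ y :=
  csInf_le_csInf (muInv_bddBelow μ y') (muInv_set_nonempty μ hlim hy)
    (fun x hx => ⟨hx.1, hx.2.trans hyy'⟩)

lemma measure_gt_eq (μ : ℝ → ℝ) (hmono : AntitoneOn μ (Set.Ioi (0 : ℝ)))
    (hlim : Tendsto μ atTop (nhds 0)) {y : ℝ} (hy : 0 < y) :
    volume ({x : ℝ | y < μ x} ∩ Set.Ioi 0) = ENNReal.ofReal (muInv μ y) := by
  set S := {x : ℝ | 0 < x ∧ μ x ≤ y} with hS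
  have hne : S.Nonempty := muInv_set_nonempty μ hlim hy
  have hbdd : BddBelow S := muInv_bddBelow μ y
  set m := muInv μ y with hm
  have h1 : Set.Ioo 0 m ⊆ {x : ℝ | y < μ x} ∩ Set.Ioi 0 := by
    intro x hx
    have hxS : x ∉ S := notMem_of_lt_csInf hx.2 hbdd
    refine ⟨?_, hx.1⟩
    by_contra h
    exact hxS ⟨hx.1, not_lt.mp h⟩
  have h2 : {x : ℝ | y < μ x} ∩ Set.Ioi 0 ⊆ Set.Ioc 0 m := by
    rintro x ⟨hx1, hx2⟩
    refine ⟨hx2, ?_⟩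
    by_contra h
    obtain ⟨x', hx'S, hx'⟩ := exists_lt_of_csInf_lt hne (not_le.mp h)
    exact absurd (hx1.trans_le (hmono hx'S.1 hx2 hx'.le)) (not_lt.mpr hx'S.2)
  refine le_antisymm ?_ ?_
  · calc volume ({x : ℝ | y < μ x} ∩ Set.Ioi 0) ≤ volume (Set.Ioc 0 m) := measure_mono h2
      _ = ENNReal.ofReal m := by rw [Real.volume_Ioc, sub_zero]
  · calc ENNReal.ofReal m = volume (Set.Ioo 0 m) := by rw [Real.volume_Ioo, sub_zero]
      _ ≤ volume ({x : ℝ | y < μ x} ∩ Set.Ioi 0) := measure_mono h1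


lemma antideriv_exp (t : ℝ) (b : ℝ) :
    ∫ u in (0:ℝ)..b, t * Real.exp (-(t*u)) = 1 - Real.exp (-(t*b)) := by
  have hd : ∀ u ∈ Set.uIcc (0:ℝ) b,
      HasDerivAt (fun u => -Real.exp (-(t*u))) (t * Real.exp (-(t*u))) u := by
    intro u _
    have h1 : HasDerivAt (fun u : ℝ => -(t*u)) (-t) u := by
      simpa [Pi.neg_def] using ((hasDerivAt_id u).const_mul t).neg
    have h2 := (Real.hasDerivAt_exp (-(t*u))).comp u h1
    have h3 := h2.neg
    exact h3.congr_deriv (by ring)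
  have hcont : Continuous fun u : ℝ => t * Real.exp (-(t*u)) := by continuity
  rw [intervalIntegral.integral_eq_sub_of_hasDerivAt hd (hcont.intervalIntegrable 0 b)]
  simp
  ring

lemma key_eq (μ : ℝ → ℝ) (hmono : AntitoneOn μ (Set.Ioi (0 : ℝ)))
    (hnn : ∀ x : ℝ, 0 < x → 0 ≤ μ x) (hlim : Tendsto μ atTop (nhds 0)) {t : ℝ} (ht : 0 < t)
    (hInt : IntegrableOn (fun s => muInv μ s * (t * Real.exp (-(t*s)))) (Set.Ioi 0)) :
    ∫ x in Set.Ioi (0:ℝ), (1 - Real.exp (-(t * μ x)))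
      = ∫ s in Set.Ioi (0:ℝ), muInv μ s * (t * Real.exp (-(t*s))) := by
  have f_nn : 0 ≤ᵐ[volume.restrict (Set.Ioi 0)] μ := by
    filter_upwards [ae_restrict_mem measurableSet_Ioi] with x hx using hnn x hx
  have f_mble : AEMeasurable μ (volume.restrict (Set.Ioi 0)) :=
    aemeasurable_restrict_of_antitoneOn measurableSet_Ioi hmono
  have gc : Continuous (fun s : ℝ => t * Real.exp (-(t*s))) := by continuity
  have g_intble : ∀ s > (0:ℝ), IntervalIntegrable (fun s => t * Real.exp (-(t*s))) volume 0 s :=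
    fun s _ => gc.intervalIntegrable 0 s
  have g_nn : ∀ᵐ s ∂(volume.restrict (Set.Ioi (0:ℝ))), 0 ≤ t * Real.exp (-(t*s)) :=
    Eventually.of_forall fun s => by positivity
  have layer := lintegral_comp_eq_lintegral_meas_lt_mul (volume.restrict (Set.Ioi 0))
    f_nn f_mble g_intble g_nn
  have lhs_eq : ∫⁻ x, ENNReal.ofReal (∫ u in (0:ℝ)..μ x, t * Real.exp (-(t*u)))
        ∂(volume.restrict (Set.Ioi 0))
      = ∫⁻ x, ENNReal.ofReal (1 - Real.exp (-(t * μ x))) ∂(volume.restrict (Set.Ioi 0)) := by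
    apply lintegral_congr; intro x; rw [antideriv_exp]
  have rhs_eq : ∫⁻ s in Set.Ioi (0:ℝ),
        (volume.restrict (Set.Ioi 0)) {a : ℝ | s < μ a} * ENNReal.ofReal (t * Real.exp (-(t*s)))
      = ∫⁻ s in Set.Ioi (0:ℝ), ENNReal.ofReal (muInv μ s * (t * Real.exp (-(t*s)))) := by
    apply setLIntegral_congr_fun measurableSet_Ioi
    intro s hs
    dsimp only
    rw [Measure.restrict_apply' measurableSet_Ioi, measure_gt_eq μ hmono hlim hs,
      ← ENNReal.ofReal_mul (muInv_nonneg μ hlim hs)]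
  have h_nn : 0 ≤ᵐ[volume.restrict (Set.Ioi (0:ℝ))]
      (fun s => muInv μ s * (t * Real.exp (-(t*s)))) := by
    filter_upwards [ae_restrict_mem measurableSet_Ioi] with s hs
    exact mul_nonneg (muInv_nonneg μ hlim hs) (by positivity)
  have one_nn : 0 ≤ᵐ[volume.restrict (Set.Ioi (0:ℝ))] (fun x => 1 - Real.exp (-(t * μ x))) := by
    filter_upwards [f_nn] with x hx
    simp only [Pi.zero_apply] at hx
    have : Real.exp (-(t * μ x)) ≤ 1 :=
      Real.exp_le_one_iff.mpr (by nlinarith [mul_nonneg ht.le hx])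
    simp only [Pi.zero_apply]
    linarith
  have asm : AEStronglyMeasurable (fun x => 1 - Real.exp (-(t * μ x)))
      (volume.restrict (Set.Ioi (0:ℝ))) := by
    have h1 : AEMeasurable (fun x => -(t * μ x)) (volume.restrict (Set.Ioi (0:ℝ))) :=
      ((f_mble.const_mul t).neg)
    exact (aemeasurable_const.sub (Real.measurable_exp.comp_aemeasurable h1)).aestronglyMeasurable
  rw [integral_eq_lintegral_of_nonneg_ae one_nn asm, ← lhs_eq, layer, rhs_eq,
    ← ofReal_integral_eq_lintegral_ofReal hInt h_nn,
    ENNReal.toReal_ofReal (integral_nonneg_of_ae h_nn)]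


lemma integral_rpow_exp {q t : ℝ} (hq : -1 < q) (ht : 0 < t) :
    ∫ s in Set.Ioi (0:ℝ), s ^ q * Real.exp (-(t*s)) = t ^ (-(q+1)) * Real.Gamma (q+1) := by
  have h := integral_rpow_mul_exp_neg_mul_rpow one_pos hq ht
  simp only [Real.rpow_one, div_one, one_div, neg_mul, inv_one, mul_one] at h
  simpa using h

lemma integrableOn_rpow_exp {q t : ℝ} (hq : -1 < q) (ht : 0 < t) :
    IntegrableOn (fun s : ℝ => s ^ q * Real.exp (-(t*s))) (Set.Ioi 0) := by
  have h := integrableOn_rpow_mul_exp_neg_mul_rpow hq one_pos ht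
  simpa [Real.rpow_one, neg_mul] using h

lemma exp_tail_integrable {t : ℝ} (ht : 0 < t) (a : ℝ) :
    IntegrableOn (fun s : ℝ => t * Real.exp (-(t*s))) (Set.Ioi a) := by
  have h := (exp_neg_integrableOn_Ioi a ht).const_mul t
  simpa [neg_mul, IntegrableOn] using h

lemma exp_tail {t : ℝ} (ht : 0 < t) (a : ℝ) :
    ∫ s in Set.Ioi a, t * Real.exp (-(t*s)) = Real.exp (-(t*a)) := by
  rw [MeasureTheory.integral_const_mul]
  have h := MeasureTheory.integral_comp_mul_left_Ioi (fun x : ℝ => Real.exp (-x)) a ht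
  rw [h, integral_exp_neg_Ioi, smul_eq_mul]
  field_simp


set_option maxHeartbeats 1000000 in
/-- core of supplementary Lemma lem:4: second-order asymptotics of
t·∫₀^∞(1 − e^{−tμ(x)})dx under the second-order tail assumption on μ⁻¹. -/
theorem second_order_number_of_vertices (α₀ c₀ β : ℝ) (hα₀ : α₀ ∈ Set.Ioo (0 : ℝ) 1)
    (hc₀ : 0 < c₀) (hβ : 0 < β)
    (μ : ℝ → ℝ) (hmono : AntitoneOn μ (Set.Ioi (0 : ℝ))) (hnn : ∀ x : ℝ, 0 < x → 0 ≤ μ x)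
    (hrc : ∀ x : ℝ, 0 < x → ContinuousWithinAt μ (Set.Ici x) x)
    (hlim : Tendsto μ atTop (nhds 0))
    (happrox : ∃ M : ℝ, 0 < M ∧ ∃ y₀ : ℝ, 0 < y₀ ∧ ∀ y ∈ Set.Ioo (0 : ℝ) y₀,
        |muInv μ y - c₀ * y ^ (-α₀)| ≤ M * y ^ (β - α₀)) :
    ∃ η : ℝ, 0 < η ∧ ∃ M : ℝ, 0 < M ∧ ∃ t₀ : ℝ, ∀ t : ℝ, t₀ ≤ t →
      |t * (∫ x in Set.Ioi (0 : ℝ), (1 - Real.exp (-(t * μ x)))) -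
          c₀ * Real.Gamma (1 - α₀) * t ^ (1 + α₀)| ≤ M * t ^ (1 + α₀ - η) ∧
      |t * (∫ x in Set.Ioi (0 : ℝ), (1 - Real.exp (-(t * μ x)))) -
          t * muInv μ (1 / t) * Real.Gamma (1 - α₀)| ≤ M * t ^ (1 + α₀ - η) := by
  obtain ⟨hα₀0, hα₀1⟩ := hα₀
  obtain ⟨M, hM, y₀, hy₀, happ⟩ := happrox
  have hy₁ : (0:ℝ) < y₀ / 2 := by positivity
  set y₁ := y₀ / 2 with hy₁def
  have hy₁y₀ : y₁ < y₀ := by rw [hy₁def]; linarith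
  have hq1 : (-1:ℝ) < -α₀ := by linarith
  have hq2 : (-1:ℝ) < β - α₀ := by linarith
  have hΓ'pos : 0 < Real.Gamma (β - α₀ + 1) := Real.Gamma_pos_of_pos (by linarith)
  have hC : 0 ≤ muInv μ y₁ := muInv_nonneg μ hlim hy₁
  have hC₂ : 0 ≤ muInv μ y₁ + c₀ * y₁ ^ (-α₀) := by
    have : (0:ℝ) < c₀ * y₁ ^ (-α₀) := by positivity
    linarith
  have hK : 0 ≤ M * Real.Gamma (β - α₀ + 1) + (muInv μ y₁ + c₀ * y₁ ^ (-α₀)) := by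
    nlinarith
  have habsΓ : 0 ≤ |Real.Gamma (1 - α₀)| * M := mul_nonneg (abs_nonneg _) hM.le
  refine ⟨β, hβ,
    M * Real.Gamma (β - α₀ + 1) + (muInv μ y₁ + c₀ * y₁ ^ (-α₀)) + |Real.Gamma (1 - α₀)| * M + 1,
    by linarith, ?_⟩
  have hev1 : ∀ᶠ x : ℝ in atTop, x ^ (β - α₀) * Real.exp (-y₁ * x) ≤ 1 :=
    (tendsto_rpow_mul_exp_neg_mul_atTop_nhds_zero (β - α₀) y₁ hy₁).eventually_le_const one_pos
  obtain ⟨t₂, ht₂⟩ := eventually_atTop.mp hev1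
  refine ⟨max (max 1 (2 / y₀)) t₂, fun t htt => ?_⟩
  have ht1 : (1:ℝ) ≤ t := le_trans (le_trans (le_max_left _ _) (le_max_left _ _)) htt
  have ht : (0:ℝ) < t := lt_of_lt_of_le one_pos ht1
  have hty₀ : 1 / t < y₀ := by
    have h2y : 2 / y₀ ≤ t := le_trans (le_trans (le_max_right _ _) (le_max_left _ _)) htt
    have h2y0 : (0:ℝ) < 2 / y₀ := by positivity
    have : 1 / t ≤ 1 / (2 / y₀) := one_div_le_one_div_of_le h2y0 h2y
    rw [one_div_div] at this
    linarith
  have hexp : Real.exp (-(t * y₁)) ≤ t ^ (α₀ - β) := by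
    have h1 := ht₂ t (le_trans (le_max_right _ _) htt)
    have hpow : (0:ℝ) < t ^ (β - α₀) := Real.rpow_pos_of_pos ht _
    have h2 : t ^ (β - α₀) * Real.exp (-(t * y₁)) ≤ 1 := by
      rw [show -(t * y₁) = -y₁ * t by ring]; exact h1
    have h3 : Real.exp (-(t * y₁)) ≤ (t ^ (β - α₀))⁻¹ := by
      rw [← one_div, le_div_iff₀ hpow]
      nlinarith [h2]
    rw [show α₀ - β = -(β - α₀) by ring, Real.rpow_neg ht.le]
    exact h3
  have hpow1 : t ^ (1 + α₀) = t * t ^ α₀ := by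
    have h := Real.rpow_add ht 1 α₀
    rwa [Real.rpow_one] at h
  have hpow2 : t ^ (1 + α₀ - β) = t * t ^ (α₀ - β) := by
    have h := Real.rpow_add ht 1 (α₀ - β)
    rwa [Real.rpow_one, show (1:ℝ) + (α₀ - β) = 1 + α₀ - β by ring] at h
  have hpow3 : (0:ℝ) < t ^ (1 + α₀ - β) := Real.rpow_pos_of_pos ht _
  -- measurability
  have hmuIoc : AEMeasurable (muInv μ) (volume.restrict (Set.Ioc 0 y₁)) :=
    aemeasurable_restrict_of_antitoneOn measurableSet_Ioc
      (fun a ha _ _ hab => muInv_anti μ hlim ha.1 hab)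
  have hmuIoi : AEMeasurable (muInv μ) (volume.restrict (Set.Ioi y₁)) :=
    aemeasurable_restrict_of_antitoneOn measurableSet_Ioi
      (fun a ha _ _ hab => muInv_anti μ hlim (hy₁.trans ha) hab)
  have gc : Continuous (fun s : ℝ => t * Real.exp (-(t * s))) := by continuity
  -- integrability of h on Ioc 0 y₁
  have hIntIoc : IntegrableOn (fun s => muInv μ s * (t * Real.exp (-(t * s))))
      (Set.Ioc 0 y₁) := by
    have hbig : IntegrableOn (fun s : ℝ => t * (c₀ * s ^ (-α₀) + M * s ^ (β - α₀)))
        (Set.Ioc 0 y₁) := by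
      apply Integrable.const_mul
      exact (((intervalIntegral.intervalIntegrable_rpow' hq1).1).const_mul c₀).add
        (((intervalIntegral.intervalIntegrable_rpow' hq2).1).const_mul M)
    refine Integrable.mono' hbig ((hmuIoc.mul gc.aemeasurable).aestronglyMeasurable) ?_
    filter_upwards [ae_restrict_mem measurableSet_Ioc] with s hs
    have hs0 : 0 < s := hs.1
    have hbnd : muInv μ s ≤ c₀ * s ^ (-α₀) + M * s ^ (β - α₀) := by
      have h := abs_le.mp (happ s ⟨hs0, lt_of_le_of_lt hs.2 hy₁y₀⟩)
      linarith [h.2]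
    have hgpos : 0 ≤ t * Real.exp (-(t * s)) := by positivity
    have hφnn : 0 ≤ muInv μ s := muInv_nonneg μ hlim hs0
    rw [Real.norm_eq_abs, abs_of_nonneg (mul_nonneg hφnn hgpos)]
    have hexple : Real.exp (-(t * s)) ≤ 1 :=
      Real.exp_le_one_iff.mpr (by nlinarith)
    have hBnn : 0 ≤ c₀ * s ^ (-α₀) + M * s ^ (β - α₀) := by positivity
    calc muInv μ s * (t * Real.exp (-(t * s)))
        ≤ (c₀ * s ^ (-α₀) + M * s ^ (β - α₀)) * (t * Real.exp (-(t * s))) :=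
          mul_le_mul_of_nonneg_right hbnd hgpos
      _ ≤ (c₀ * s ^ (-α₀) + M * s ^ (β - α₀)) * (t * 1) :=
          mul_le_mul_of_nonneg_left (mul_le_mul_of_nonneg_left hexple ht.le) hBnn
      _ = t * (c₀ * s ^ (-α₀) + M * s ^ (β - α₀)) := by ring
  -- integrability of h on Ioi y₁
  have hIntIoi : IntegrableOn (fun s => muInv μ s * (t * Real.exp (-(t * s))))
      (Set.Ioi y₁) := by
    refine Integrable.mono' ((exp_tail_integrable ht y₁).const_mul (muInv μ y₁))
      ((hmuIoi.mul gc.aemeasurable).aestronglyMeasurable) ?_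
    filter_upwards [ae_restrict_mem measurableSet_Ioi] with s hs
    have hs0 : 0 < s := hy₁.trans hs
    rw [Real.norm_eq_abs, abs_of_nonneg (mul_nonneg (muInv_nonneg μ hlim hs0) (by positivity))]
    exact mul_le_mul_of_nonneg_right (muInv_anti μ hlim hy₁ (le_of_lt hs)) (by positivity)
  have hsplit : Set.Ioc (0:ℝ) y₁ ∪ Set.Ioi y₁ = Set.Ioi 0 := Set.Ioc_union_Ioi_eq_Ioi hy₁.le
  have hInt : IntegrableOn (fun s => muInv μ s * (t * Real.exp (-(t * s)))) (Set.Ioi 0) := by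
    rw [← hsplit]; exact hIntIoc.union hIntIoi
  have key := key_eq μ hmono hnn hlim ht hInt
  -- a and b integrands
  have haeq : (fun s : ℝ => c₀ * s ^ (-α₀) * (t * Real.exp (-(t * s))))
      = fun s => (c₀ * t) * (s ^ (-α₀) * Real.exp (-(t * s))) := funext fun s => by ring
  have hbeq : (fun s : ℝ => M * s ^ (β - α₀) * (t * Real.exp (-(t * s))))
      = fun s => (M * t) * (s ^ (β - α₀) * Real.exp (-(t * s))) := funext fun s => by ring
  have ha_int : IntegrableOn (fun s : ℝ => c₀ * s ^ (-α₀) * (t * Real.exp (-(t * s))))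
      (Set.Ioi 0) := by
    rw [haeq]; exact (integrableOn_rpow_exp hq1 ht).const_mul _
  have hb_int : IntegrableOn (fun s : ℝ => M * s ^ (β - α₀) * (t * Real.exp (-(t * s))))
      (Set.Ioi 0) := by
    rw [hbeq]; exact (integrableOn_rpow_exp hq2 ht).const_mul _
  have hA : ∫ s in Set.Ioi (0:ℝ), c₀ * s ^ (-α₀) * (t * Real.exp (-(t * s)))
      = c₀ * Real.Gamma (1 - α₀) * t ^ α₀ := by
    rw [haeq]
    rw [MeasureTheory.integral_const_mul, integral_rpow_exp hq1 ht,
      show (-(-α₀ + 1) : ℝ) = α₀ - 1 by ring, show (-α₀ + 1 : ℝ) = 1 - α₀ by ring]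
    have hta : t ^ α₀ = t * t ^ (α₀ - 1) := by
      have h := Real.rpow_add ht 1 (α₀ - 1)
      rwa [Real.rpow_one, show (1:ℝ) + (α₀ - 1) = α₀ by ring] at h
    rw [hta]; ring
  have hB : ∫ s in Set.Ioi (0:ℝ), M * s ^ (β - α₀) * (t * Real.exp (-(t * s)))
      = M * Real.Gamma (β - α₀ + 1) * t ^ (α₀ - β) := by
    rw [hbeq]
    rw [MeasureTheory.integral_const_mul, integral_rpow_exp hq2 ht]
    have hta : t ^ (α₀ - β) = t * t ^ (-(β - α₀ + 1)) := by
      have h := Real.rpow_add ht 1 (-(β - α₀ + 1))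
      rwa [Real.rpow_one, show (1:ℝ) + -(β - α₀ + 1) = α₀ - β by ring] at h
    rw [hta]; ring
  -- splits
  have hI_split : ∫ s in Set.Ioi (0:ℝ), muInv μ s * (t * Real.exp (-(t * s)))
      = (∫ s in Set.Ioc (0:ℝ) y₁, muInv μ s * (t * Real.exp (-(t * s))))
        + ∫ s in Set.Ioi y₁, muInv μ s * (t * Real.exp (-(t * s))) := by
    rw [← hsplit, setIntegral_union (Set.Ioc_disjoint_Ioi le_rfl) measurableSet_Ioi
      hIntIoc hIntIoi]
  have hA_split : ∫ s in Set.Ioi (0:ℝ), c₀ * s ^ (-α₀) * (t * Real.exp (-(t * s)))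
      = (∫ s in Set.Ioc (0:ℝ) y₁, c₀ * s ^ (-α₀) * (t * Real.exp (-(t * s))))
        + ∫ s in Set.Ioi y₁, c₀ * s ^ (-α₀) * (t * Real.exp (-(t * s))) := by
    rw [← hsplit, setIntegral_union (Set.Ioc_disjoint_Ioi le_rfl) measurableSet_Ioi
      (ha_int.mono_set Set.Ioc_subset_Ioi_self) (ha_int.mono_set (Set.Ioi_subset_Ioi hy₁.le))]
  -- error bounds
  have e1 : |(∫ s in Set.Ioc (0:ℝ) y₁, muInv μ s * (t * Real.exp (-(t * s))))
        - ∫ s in Set.Ioc (0:ℝ) y₁, c₀ * s ^ (-α₀) * (t * Real.exp (-(t * s)))|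
      ≤ M * Real.Gamma (β - α₀ + 1) * t ^ (α₀ - β) := by
    rw [← integral_sub hIntIoc (ha_int.mono_set Set.Ioc_subset_Ioi_self)]
    have hb_Ioc := hb_int.mono_set (Set.Ioc_subset_Ioi_self (a := y₁) (b := (0:ℝ)))
    have step1 : |∫ s in Set.Ioc (0:ℝ) y₁, (muInv μ s * (t * Real.exp (-(t * s)))
          - c₀ * s ^ (-α₀) * (t * Real.exp (-(t * s))))|
        ≤ ∫ s in Set.Ioc (0:ℝ) y₁, M * s ^ (β - α₀) * (t * Real.exp (-(t * s))) := by
      rw [← Real.norm_eq_abs]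
      apply MeasureTheory.norm_integral_le_of_norm_le hb_Ioc
      filter_upwards [ae_restrict_mem measurableSet_Ioc] with s hs
      rw [show muInv μ s * (t * Real.exp (-(t * s))) - c₀ * s ^ (-α₀) * (t * Real.exp (-(t * s)))
          = (muInv μ s - c₀ * s ^ (-α₀)) * (t * Real.exp (-(t * s))) by ring,
        Real.norm_eq_abs, abs_mul, abs_of_nonneg (show (0:ℝ) ≤ t * Real.exp (-(t * s)) by positivity)]
      have h := happ s ⟨hs.1, lt_of_le_of_lt hs.2 hy₁y₀⟩
      have hge : (0:ℝ) ≤ t * Real.exp (-(t * s)) := by positivity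
      calc |muInv μ s - c₀ * s ^ (-α₀)| * (t * Real.exp (-(t * s)))
          ≤ (M * s ^ (β - α₀)) * (t * Real.exp (-(t * s))) := mul_le_mul_of_nonneg_right h hge
        _ = M * s ^ (β - α₀) * (t * Real.exp (-(t * s))) := by ring
    have step2 : ∫ s in Set.Ioc (0:ℝ) y₁, M * s ^ (β - α₀) * (t * Real.exp (-(t * s)))
        ≤ ∫ s in Set.Ioi (0:ℝ), M * s ^ (β - α₀) * (t * Real.exp (-(t * s))) := by
      apply setIntegral_mono_set hb_int
      · filter_upwards [ae_restrict_mem measurableSet_Ioi] with s hs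
        have : 0 < s := hs
        positivity
      · exact HasSubset.Subset.eventuallyLE Set.Ioc_subset_Ioi_self
    calc _ ≤ _ := step1
      _ ≤ _ := step2
      _ = _ := hB
  have e2 : |∫ s in Set.Ioi y₁, muInv μ s * (t * Real.exp (-(t * s)))|
      ≤ muInv μ y₁ * Real.exp (-(t * y₁)) := by
    rw [← Real.norm_eq_abs]
    have step : ‖∫ s in Set.Ioi y₁, muInv μ s * (t * Real.exp (-(t * s)))‖
        ≤ ∫ s in Set.Ioi y₁, muInv μ y₁ * (t * Real.exp (-(t * s))) := by
      apply MeasureTheory.norm_integral_le_of_norm_le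
        ((exp_tail_integrable ht y₁).const_mul (muInv μ y₁))
      filter_upwards [ae_restrict_mem measurableSet_Ioi] with s hs
      have hs0 : 0 < s := hy₁.trans hs
      rw [Real.norm_eq_abs, abs_of_nonneg (mul_nonneg (muInv_nonneg μ hlim hs0) (by positivity))]
      exact mul_le_mul_of_nonneg_right (muInv_anti μ hlim hy₁ (le_of_lt hs)) (by positivity)
    calc _ ≤ _ := step
      _ = muInv μ y₁ * Real.exp (-(t * y₁)) := by
        rw [MeasureTheory.integral_const_mul, exp_tail ht]
  have e3 : |∫ s in Set.Ioi y₁, c₀ * s ^ (-α₀) * (t * Real.exp (-(t * s)))|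
      ≤ c₀ * y₁ ^ (-α₀) * Real.exp (-(t * y₁)) := by
    rw [← Real.norm_eq_abs]
    have step : ‖∫ s in Set.Ioi y₁, c₀ * s ^ (-α₀) * (t * Real.exp (-(t * s)))‖
        ≤ ∫ s in Set.Ioi y₁, c₀ * y₁ ^ (-α₀) * (t * Real.exp (-(t * s))) := by
      apply MeasureTheory.norm_integral_le_of_norm_le
        ((exp_tail_integrable ht y₁).const_mul (c₀ * y₁ ^ (-α₀)))
      filter_upwards [ae_restrict_mem measurableSet_Ioi] with s hs
      have hs0 : 0 < s := hy₁.trans hs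
      have hrle : s ^ (-α₀) ≤ y₁ ^ (-α₀) :=
        Real.rpow_le_rpow_of_nonpos hy₁ (le_of_lt hs) (by linarith)
      rw [Real.norm_eq_abs, abs_of_nonneg (by positivity)]
      have : c₀ * s ^ (-α₀) ≤ c₀ * y₁ ^ (-α₀) := by nlinarith
      calc c₀ * s ^ (-α₀) * (t * Real.exp (-(t * s)))
          ≤ c₀ * y₁ ^ (-α₀) * (t * Real.exp (-(t * s))) :=
            mul_le_mul_of_nonneg_right this (by positivity)
        _ = c₀ * y₁ ^ (-α₀) * (t * Real.exp (-(t * s))) := rfl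
    calc _ ≤ _ := step
      _ = c₀ * y₁ ^ (-α₀) * Real.exp (-(t * y₁)) := by
        rw [MeasureTheory.integral_const_mul, exp_tail ht]
  have habc : ∀ X Y Z : ℝ, |X + Y - Z| ≤ |X| + |Y| + |Z| := by
    intro X Y Z
    calc |X + Y - Z| = |(X + Y) + (-Z)| := by rw [← sub_eq_add_neg]
      _ ≤ |X + Y| + |(-Z)| := abs_add_le _ _
      _ ≤ (|X| + |Y|) + |Z| := by rw [abs_neg]; exact add_le_add_left (abs_add_le X Y) |Z|
      _ = |X| + |Y| + |Z| := by ring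
  have est : |(∫ s in Set.Ioi (0:ℝ), muInv μ s * (t * Real.exp (-(t * s))))
        - c₀ * Real.Gamma (1 - α₀) * t ^ α₀|
      ≤ M * Real.Gamma (β - α₀ + 1) * t ^ (α₀ - β)
        + (muInv μ y₁ + c₀ * y₁ ^ (-α₀)) * Real.exp (-(t * y₁)) := by
    rw [hI_split, ← hA, hA_split]
    have h4 := habc
      ((∫ s in Set.Ioc (0:ℝ) y₁, muInv μ s * (t * Real.exp (-(t * s))))
        - ∫ s in Set.Ioc (0:ℝ) y₁, c₀ * s ^ (-α₀) * (t * Real.exp (-(t * s))))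
      (∫ s in Set.Ioi y₁, muInv μ s * (t * Real.exp (-(t * s))))
      (∫ s in Set.Ioi y₁, c₀ * s ^ (-α₀) * (t * Real.exp (-(t * s))))
    have heq : (∫ s in Set.Ioc (0:ℝ) y₁, muInv μ s * (t * Real.exp (-(t * s))))
          + (∫ s in Set.Ioi y₁, muInv μ s * (t * Real.exp (-(t * s))))
          - ((∫ s in Set.Ioc (0:ℝ) y₁, c₀ * s ^ (-α₀) * (t * Real.exp (-(t * s))))
            + ∫ s in Set.Ioi y₁, c₀ * s ^ (-α₀) * (t * Real.exp (-(t * s))))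
        = ((∫ s in Set.Ioc (0:ℝ) y₁, muInv μ s * (t * Real.exp (-(t * s))))
            - ∫ s in Set.Ioc (0:ℝ) y₁, c₀ * s ^ (-α₀) * (t * Real.exp (-(t * s))))
          + (∫ s in Set.Ioi y₁, muInv μ s * (t * Real.exp (-(t * s))))
          - ∫ s in Set.Ioi y₁, c₀ * s ^ (-α₀) * (t * Real.exp (-(t * s))) := by ring
    rw [heq]
    have := e1; have := e2; have := e3
    nlinarith [Real.exp_pos (-(t * y₁))]
  -- first bound
  have bound1 : |t * (∫ x in Set.Ioi (0:ℝ), (1 - Real.exp (-(t * μ x))))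
        - c₀ * Real.Gamma (1 - α₀) * t ^ (1 + α₀)|
      ≤ (M * Real.Gamma (β - α₀ + 1) + (muInv μ y₁ + c₀ * y₁ ^ (-α₀))) * t ^ (1 + α₀ - β) := by
    rw [key]
    have hre : t * (∫ s in Set.Ioi (0:ℝ), muInv μ s * (t * Real.exp (-(t * s))))
          - c₀ * Real.Gamma (1 - α₀) * t ^ (1 + α₀)
        = t * ((∫ s in Set.Ioi (0:ℝ), muInv μ s * (t * Real.exp (-(t * s))))
          - c₀ * Real.Gamma (1 - α₀) * t ^ α₀) := by
      rw [hpow1]; ring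
    rw [hre, abs_mul, abs_of_pos ht]
    calc t * |(∫ s in Set.Ioi (0:ℝ), muInv μ s * (t * Real.exp (-(t * s))))
          - c₀ * Real.Gamma (1 - α₀) * t ^ α₀|
        ≤ t * (M * Real.Gamma (β - α₀ + 1) * t ^ (α₀ - β)
          + (muInv μ y₁ + c₀ * y₁ ^ (-α₀)) * Real.exp (-(t * y₁))) :=
          mul_le_mul_of_nonneg_left est ht.le
      _ ≤ t * (M * Real.Gamma (β - α₀ + 1) * t ^ (α₀ - β)
          + (muInv μ y₁ + c₀ * y₁ ^ (-α₀)) * t ^ (α₀ - β)) := by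
          have h5 : (muInv μ y₁ + c₀ * y₁ ^ (-α₀)) * Real.exp (-(t * y₁))
              ≤ (muInv μ y₁ + c₀ * y₁ ^ (-α₀)) * t ^ (α₀ - β) :=
            mul_le_mul_of_nonneg_left hexp hC₂
          nlinarith
      _ = (M * Real.Gamma (β - α₀ + 1) + (muInv μ y₁ + c₀ * y₁ ^ (-α₀))) * (t * t ^ (α₀ - β)) := by
          ring
      _ = (M * Real.Gamma (β - α₀ + 1) + (muInv μ y₁ + c₀ * y₁ ^ (-α₀))) * t ^ (1 + α₀ - β) := by
          rw [hpow2]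
  -- second bound piece
  have hsecond : |c₀ * Real.Gamma (1 - α₀) * t ^ (1 + α₀)
        - t * muInv μ (1 / t) * Real.Gamma (1 - α₀)|
      ≤ |Real.Gamma (1 - α₀)| * M * t ^ (1 + α₀ - β) := by
    have h1t : (0:ℝ) < 1 / t := by positivity
    have happt := happ (1 / t) ⟨h1t, hty₀⟩
    have hinv1 : (1 / t : ℝ) ^ (-α₀) = t ^ α₀ := by
      rw [one_div, Real.inv_rpow ht.le, Real.rpow_neg ht.le, inv_inv]
    have hinv2 : (1 / t : ℝ) ^ (β - α₀) = t ^ (α₀ - β) := by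
      rw [one_div, Real.inv_rpow ht.le, ← Real.rpow_neg ht.le, show (-(β - α₀) : ℝ) = α₀ - β by ring]
    rw [hinv1, hinv2] at happt
    have hstep : |c₀ * Real.Gamma (1 - α₀) * t ^ (1 + α₀)
          - t * muInv μ (1 / t) * Real.Gamma (1 - α₀)|
        = |Real.Gamma (1 - α₀)| * (t * |muInv μ (1 / t) - c₀ * t ^ α₀|) := by
      rw [show c₀ * Real.Gamma (1 - α₀) * t ^ (1 + α₀)
            - t * muInv μ (1 / t) * Real.Gamma (1 - α₀)
          = Real.Gamma (1 - α₀) * (t * (c₀ * t ^ α₀ - muInv μ (1 / t))) by rw [hpow1]; ring,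
        abs_mul, abs_mul, abs_of_pos ht, abs_sub_comm (c₀ * t ^ α₀)]
    rw [hstep]
    calc |Real.Gamma (1 - α₀)| * (t * |muInv μ (1 / t) - c₀ * t ^ α₀|)
        ≤ |Real.Gamma (1 - α₀)| * (t * (M * t ^ (α₀ - β))) := by
          apply mul_le_mul_of_nonneg_left _ (abs_nonneg _)
          exact mul_le_mul_of_nonneg_left happt ht.le
      _ = |Real.Gamma (1 - α₀)| * M * (t * t ^ (α₀ - β)) := by ring
      _ = |Real.Gamma (1 - α₀)| * M * t ^ (1 + α₀ - β) := by rw [hpow2]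
  constructor
  · calc |t * (∫ x in Set.Ioi (0:ℝ), (1 - Real.exp (-(t * μ x))))
          - c₀ * Real.Gamma (1 - α₀) * t ^ (1 + α₀)|
        ≤ (M * Real.Gamma (β - α₀ + 1) + (muInv μ y₁ + c₀ * y₁ ^ (-α₀))) * t ^ (1 + α₀ - β) :=
          bound1
      _ ≤ (M * Real.Gamma (β - α₀ + 1) + (muInv μ y₁ + c₀ * y₁ ^ (-α₀))
            + |Real.Gamma (1 - α₀)| * M + 1) * t ^ (1 + α₀ - β) := by nlinarith
  · calc |t * (∫ x in Set.Ioi (0:ℝ), (1 - Real.exp (-(t * μ x))))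
          - t * muInv μ (1 / t) * Real.Gamma (1 - α₀)|
        ≤ |t * (∫ x in Set.Ioi (0:ℝ), (1 - Real.exp (-(t * μ x))))
            - c₀ * Real.Gamma (1 - α₀) * t ^ (1 + α₀)|
          + |c₀ * Real.Gamma (1 - α₀) * t ^ (1 + α₀)
            - t * muInv μ (1 / t) * Real.Gamma (1 - α₀)| := abs_sub_le _ _ _
      _ ≤ (M * Real.Gamma (β - α₀ + 1) + (muInv μ y₁ + c₀ * y₁ ^ (-α₀))) * t ^ (1 + α₀ - β)
          + |Real.Gamma (1 - α₀)| * M * t ^ (1 + α₀ - β) := add_le_add bound1 hsecond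
      _ ≤ (M * Real.Gamma (β - α₀ + 1) + (muInv μ y₁ + c₀ * y₁ ^ (-α₀))
            + |Real.Gamma (1 - α₀)| * M + 1) * t ^ (1 + α₀ - β) := by nlinarith
end
end
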